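/- arXiv:1506.03542 — 5 statements merged into one kernel-verified Lean document; each statement's English description precedes it below -/
import Mathlib

section
/- Let ρ = p|0⟩⟨0| + (1−p)|1⟩⟨1| with 1/2 < p < 1 and N even. In the Schur-Weyl decomposition ρ^{⊗N} = ⊕_{j=0}^{N/2} q_{j,N} (ρ_j ⊗ I_{m_j}/m_j), the probability of the angular momentum quantum number j is q_{j,N} = ((2j+1)/(2j0)) [B(N+1,p,N/2+j+1) − B(N+1,p,N/2−j)], where B(n,p,k) = C(n,k) p^k (1−p)^{n−k} is the binomial probability mass function and j0 = (p−1/2)(N+1). -/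
/-- The binomial probability mass function `B(n,p,k) = C(n,k) p^k (1-p)^(n-k)`. -/
noncomputable def binomPMF (n : ℕ) (p : ℝ) (k : ℕ) : ℝ :=
  (n.choose k : ℝ) * p ^ k * (1 - p) ^ (n - k)

lemma choose_key (j a : ℕ) :
    (2 * (j + a) + 1) * ((2 * (j + a)).choose a)
      = (2 * j + 1) * ((2 * (j + a) + 1).choose a)
        + (2 * (j + a) + 1) * ((2 * (j + a)).choose ((j + a) + j + 1)) := by
  cases a with
  | zero =>
    have h0 : (2 * j).choose (j + j + 1) = 0 :=
      Nat.choose_eq_zero_of_lt (by omega)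
    simp [h0]
  | succ b =>
    set M := 2 * (j + (b + 1)) with hM
    have e1 : (j + (b + 1)) + j + 1 = 2 * j + b + 2 := by omega
    have e2 : M - (2 * j + b + 2) = b := by omega
    have h1 : M.choose (2 * j + b + 2) = M.choose b := by
      have := Nat.choose_symm (n := M) (k := 2 * j + b + 2) (by omega)
      rw [e2] at this; exact this.symm
    have h2 : (M + 1).choose (b + 1) = M.choose b + M.choose (b + 1) :=
      Nat.choose_succ_succ M b
    have h3 : M.choose (b + 1) * (b + 1) = M.choose b * (M - b) :=
      Nat.choose_succ_right_eq M b
    have e3 : M - b = 2 * j + b + 2 := by omega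
    rw [e3] at h3
    rw [e1, h1, h2]
    have hMz : (M : ℤ) = 2 * j + 2 * b + 2 := by omega
    zify at h3 ⊢
    linear_combination 2 * h3 + (((M.choose (b + 1) : ℤ)) - (M.choose b : ℤ)) * hMz

/-- In the Schur–Weyl decomposition of `ρ^{⊗N}` with
`ρ = p|0⟩⟨0| + (1-p)|1⟩⟨1|`, `1/2 < p < 1`, `N` even, the weight of the
angular-momentum-`j` block is
`q_{j,N} = m_j ⬝ ∑_{m=-j}^{j} p^{N/2+m} (1-p)^{N/2-m}`, where
`m_j = C(N, N/2-j) - C(N, N/2-j-1)` is the multiplicity.  This weight equals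
`((2j+1)/(2 j0)) [B(N+1,p,N/2+j+1) - B(N+1,p,N/2-j)]` with `j0 = (p-1/2)(N+1)`. -/
theorem q_jN_formula (N : ℕ) (hN : Even N) (p : ℝ) (hp : 1 / 2 < p) (hp1 : p < 1)
    (j : ℕ) (hj : j ≤ N / 2) :
    (((N.choose (N / 2 - j) : ℝ) - (N.choose (N / 2 + j + 1) : ℝ)) *
        ∑ m ∈ Finset.range (2 * j + 1), p ^ (N / 2 + j - m) * (1 - p) ^ (N / 2 - j + m))
      = ((2 * (j : ℝ) + 1) / (2 * ((p - 1 / 2) * ((N : ℝ) + 1)))) *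
        (binomPMF (N + 1) p (N / 2 + j + 1) - binomPMF (N + 1) p (N / 2 - j)) := by
  have hmod : N % 2 = 0 := Nat.even_iff.mp hN
  set n := N / 2 with hn
  have hN2 : N = 2 * n := by omega
  -- telescoping sum
  set f : ℕ → ℝ := fun m => p ^ (n + j + 1 - m) * (1 - p) ^ (n - j + m) with hf
  have hsum : (2 * p - 1) * (∑ m ∈ Finset.range (2 * j + 1),
        p ^ (n + j - m) * (1 - p) ^ (n - j + m))
      = p ^ (n + j + 1) * (1 - p) ^ (n - j) - p ^ (n - j) * (1 - p) ^ (n + j + 1) := by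
    rw [Finset.mul_sum]
    have : ∀ m ∈ Finset.range (2 * j + 1),
        (2 * p - 1) * (p ^ (n + j - m) * (1 - p) ^ (n - j + m)) = f m - f (m + 1) := by
      intro m hm
      have hm' : m ≤ 2 * j := by simpa [Nat.lt_succ_iff] using hm
      have e1 : n + j + 1 - m = (n + j - m) + 1 := by omega
      have e2 : n + j + 1 - (m + 1) = n + j - m := by omega
      have e3 : n - j + (m + 1) = (n - j + m) + 1 := by omega
      simp only [hf, e1, e2, e3]
      ring
    rw [Finset.sum_congr rfl this, Finset.sum_range_sub' f]
    have e4 : n + j + 1 - (2 * j + 1) = n - j := by omega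
    have e5 : n - j + (2 * j + 1) = n + j + 1 := by omega
    simp only [hf, e4, e5, Nat.sub_zero, Nat.add_zero]
  -- binomial key identity
  have hjn : j + (n - j) = n := by omega
  have h := choose_key j (n - j)
  rw [hjn, ← hN2] at h
  have hkey : (((N.choose (n - j) : ℝ)) - (N.choose (n + j + 1) : ℝ)) * ((N : ℝ) + 1)
      = (2 * (j : ℝ) + 1) * ((N + 1).choose (n - j) : ℝ) := by
    have hc := congrArg (Nat.cast : ℕ → ℝ) h
    push_cast at hc
    linarith [hc]
  -- unfold binomPMF and fix nat subtractions
  have e1 : N + 1 - (n + j + 1) = n - j := by omega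
  have e2 : N + 1 - (n - j) = n + j + 1 := by omega
  have hsymm : (N + 1).choose (n + j + 1) = (N + 1).choose (n - j) := by
    have := Nat.choose_symm (n := N + 1) (k := n + j + 1) (by omega)
    rw [e1] at this; exact this.symm
  simp only [binomPMF, e1, e2, hsymm]
  have hne : (2 : ℝ) * ((p - 1 / 2) * ((N : ℝ) + 1)) ≠ 0 := by
    have : (0 : ℝ) < (N : ℝ) + 1 := by positivity
    have h2 : (0 : ℝ) < p - 1 / 2 := by linarith
    positivity
  rw [div_mul_eq_mul_div, eq_div_iff hne]
  linear_combination (((N : ℝ) + 1) * (((N.choose (n - j) : ℝ)) - (N.choose (n + j + 1) : ℝ))) * hsum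
    + (p ^ (n + j + 1) * (1 - p) ^ (n - j) - p ^ (n - j) * (1 - p) ^ (n + j + 1)) * hkey
end

section
/- Let C be a quantum channel (completely positive trace-preserving map) on a finite-dimensional Hilbert space, let Fix(C) be its set of fixed points, let {A_x} ⊂ Fix(C) be a family of positive semidefinite fixed points, and let E = ∫ μ(dx) A_x for a non-negative measure μ. Then the set A = E^{−1/2} Fix(C) E^{−1/2} (with inverse taken on the support of E) is a *-subalgebra of operators, and E^{1/2} A E^{1/2} ⊆ Fix(C). -/
open Matrix MeasureTheory
open scoped ComplexOrder

set_option linter.unusedSectionVars false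
set_option linter.unnecessarySimpa false
set_option linter.unusedVariables false
set_option maxHeartbeats 1600000

namespace FixedPointAlgebraAux

variable {n : Type*} [Fintype n] [DecidableEq n]

open scoped MatrixOrder in
noncomputable def _root_.Matrix.PosSemidef.sqrt {M : Matrix n n ℂ} (hM : M.PosSemidef) :
    Matrix n n ℂ := CFC.sqrt M

open scoped MatrixOrder in
lemma _root_.Matrix.PosSemidef.sqrt_mul_self {M : Matrix n n ℂ} (hM : M.PosSemidef) :
    hM.sqrt * hM.sqrt = M := CFC.sqrt_mul_sqrt_self M hM.nonneg

open scoped MatrixOrder in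
lemma _root_.Matrix.PosSemidef.posSemidef_sqrt {M : Matrix n n ℂ} (hM : M.PosSemidef) :
    hM.sqrt.PosSemidef := (CFC.sqrt_nonneg M).posSemidef

lemma trace_ctm (M : Matrix n n ℂ) :
    Matrix.trace (Mᴴ * M) = ((∑ a, ∑ b, Complex.normSq (M a b) : ℝ) : ℂ) := by
  rw [Matrix.trace]
  push_cast
  rw [Finset.sum_comm]
  refine Finset.sum_congr rfl fun a _ => ?_
  rw [Matrix.diag_apply, Matrix.mul_apply]
  refine Finset.sum_congr rfl fun b _ => ?_
  rw [Matrix.conjTranspose_apply, Complex.star_def, ← Complex.normSq_eq_conj_mul_self]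

lemma eq_zero_of_sum_trace_eq_zero {ι : Type} [Fintype ι] (X : ι → Matrix n n ℂ)
    (h : ∑ i, Matrix.trace ((X i)ᴴ * X i) = 0) : ∀ i, X i = 0 := by
  have h' : ∑ i, (∑ a, ∑ b, Complex.normSq (X i a b)) = 0 := by
    have := h
    simp only [trace_ctm] at this
    exact_mod_cast this
  intro i
  ext a b
  have hnn : ∀ i ∈ Finset.univ, (0:ℝ) ≤ ∑ a, ∑ b, Complex.normSq (X i a b) :=
    fun i _ => Finset.sum_nonneg fun a _ => Finset.sum_nonneg fun b _ => Complex.normSq_nonneg _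
  have h1 := (Finset.sum_eq_zero_iff_of_nonneg hnn).mp h' i (Finset.mem_univ i)
  have hnn2 : ∀ a ∈ Finset.univ, (0:ℝ) ≤ ∑ b, Complex.normSq (X i a b) :=
    fun a _ => Finset.sum_nonneg fun b _ => Complex.normSq_nonneg _
  have h2 := (Finset.sum_eq_zero_iff_of_nonneg hnn2).mp h1 a (Finset.mem_univ a)
  have h3 := (Finset.sum_eq_zero_iff_of_nonneg
    (fun b _ => Complex.normSq_nonneg (X i a b))).mp h2 b (Finset.mem_univ b)
  simpa using Complex.normSq_eq_zero.mp h3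

lemma eq_zero_of_trace_ctm {M : Matrix n n ℂ} (h : Matrix.trace (Mᴴ * M) = 0) : M = 0 :=
  eq_zero_of_sum_trace_eq_zero (fun _ : Fin 1 => M) (by simpa using h) 0

lemma psd_trace_nonneg {M : Matrix n n ℂ} (hM : M.PosSemidef) : 0 ≤ M.trace := by
  rw [Matrix.trace]
  refine Finset.sum_nonneg fun i _ => ?_
  exact hM.diag_nonneg

lemma psd_trace_eq_zero {M : Matrix n n ℂ} (hM : M.PosSemidef) (h : M.trace = 0) :
    M = 0 := by
  have hs := hM.sqrt_mul_self
  have hherm : hM.sqrtᴴ = hM.sqrt := hM.posSemidef_sqrt.1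
  have : Matrix.trace (hM.sqrtᴴ * hM.sqrt) = 0 := by rw [hherm, hs, h]
  rw [eq_zero_of_trace_ctm this] at hs
  simpa using hs.symm

lemma psd_corner {M Pp : Matrix n n ℂ} (hM : M.PosSemidef) (hPp : Ppᴴ = Pp)
    (h : Matrix.trace (Pp * M * Pp) = 0) : Pp * M = 0 ∧ M * Pp = 0 := by
  have hs := hM.sqrt_mul_self
  have hherm : hM.sqrtᴴ = hM.sqrt := hM.posSemidef_sqrt.1
  set R := hM.sqrt with hR
  have key : (R * Pp)ᴴ * (R * Pp) = Pp * M * Pp := by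
    rw [conjTranspose_mul, hPp, hherm, ← hs]
    noncomm_ring
  have hz : R * Pp = 0 := eq_zero_of_trace_ctm (by rw [key, h])
  have hMPp : M * Pp = 0 := by rw [← hs, Matrix.mul_assoc, hz, Matrix.mul_zero]
  refine ⟨?_, hMPp⟩
  have := congrArg conjTranspose hMPp
  simpa [conjTranspose_mul, hPp, hM.1.eq] using this

noncomputable def Ch {ι : Type} [Fintype ι] (K : ι → Matrix n n ℂ) (M : Matrix n n ℂ) :
    Matrix n n ℂ := ∑ i, K i * M * (K i)ᴴ

variable {ι : Type} [Fintype ι] (K : ι → Matrix n n ℂ)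

lemma Ch_add (M N : Matrix n n ℂ) : Ch K (M + N) = Ch K M + Ch K N := by
  simp [Ch, mul_add, add_mul, Finset.sum_add_distrib]

lemma Ch_smul (c : ℂ) (M : Matrix n n ℂ) : Ch K (c • M) = c • Ch K M := by
  simp [Ch, Matrix.mul_smul, Matrix.smul_mul, Finset.smul_sum]

lemma Ch_sub (M N : Matrix n n ℂ) : Ch K (M - N) = Ch K M - Ch K N := by
  simp [Ch, mul_sub, sub_mul, Finset.sum_sub_distrib]

lemma Ch_ct (M : Matrix n n ℂ) : Ch K Mᴴ = (Ch K M)ᴴ := by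
  simp [Ch, conjTranspose_sum, conjTranspose_mul, Matrix.mul_assoc]

lemma Ch_psd {M : Matrix n n ℂ} (hM : M.PosSemidef) : (Ch K M).PosSemidef := by
  classical
  unfold Ch
  induction (Finset.univ : Finset ι) using Finset.induction with
  | empty => simpa using Matrix.PosSemidef.zero
  | insert a s h ih =>
      rw [Finset.sum_insert h]
      exact (hM.mul_mul_conjTranspose_same _).add ih

lemma Ch_trace (hK1 : ∑ i, (K i)ᴴ * K i = 1) (M : Matrix n n ℂ) :
    (Ch K M).trace = M.trace := by
  unfold Ch
  rw [Matrix.trace_sum]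
  calc ∑ i, (K i * M * (K i)ᴴ).trace = ∑ i, ((K i)ᴴ * K i * M).trace := by
        refine Finset.sum_congr rfl fun i _ => ?_
        rw [Matrix.trace_mul_cycle]
    _ = ((∑ i, (K i)ᴴ * K i) * M).trace := by
        rw [Finset.sum_mul, Matrix.trace_sum]
    _ = M.trace := by rw [hK1, Matrix.one_mul]


lemma herm_parts (H : Matrix n n ℂ) (hH : H.IsHermitian) :
    ∃ Hp Hm Pp : Matrix n n ℂ, Hp.PosSemidef ∧ Hm.PosSemidef ∧ H = Hp - Hm ∧
      Ppᴴ = Pp ∧ Pp * Pp = Pp ∧ Pp * Hp = Hp ∧ Hp * Pp = Hp ∧ Pp * Hm = 0 ∧ Hm * Pp = 0 := by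
  set U : Matrix n n ℂ := (hH.eigenvectorUnitary : Matrix n n ℂ) with hUdef
  have hUU : Uᴴ * U = 1 := Matrix.UnitaryGroup.star_mul_self _
  set d : n → ℝ := hH.eigenvalues with hddef
  have hspec : H = U * diagonal (RCLike.ofReal ∘ d) * Uᴴ := hH.spectral_theorem
  set dp : n → ℂ := fun i => ((max (d i) 0 : ℝ) : ℂ) with hdp
  set dm : n → ℂ := fun i => ((max (-d i) 0 : ℝ) : ℂ) with hdm
  set χ : n → ℂ := fun i => if 0 < d i then 1 else 0 with hχ
  have sandwich : ∀ a b : n → ℂ,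
      (U * diagonal a * Uᴴ) * (U * diagonal b * Uᴴ) = U * diagonal (fun i => a i * b i) * Uᴴ := by
    intro a b
    calc (U * diagonal a * Uᴴ) * (U * diagonal b * Uᴴ)
        = U * (diagonal a * (Uᴴ * U) * diagonal b) * Uᴴ := by noncomm_ring
      _ = U * diagonal (fun i => a i * b i) * Uᴴ := by
          rw [hUU, Matrix.mul_one, diagonal_mul_diagonal]
  have hχdp : (fun i => χ i * dp i) = dp := by
    funext i; simp only [hχ, hdp]
    split
    · simp
    · rename_i hdi; simp [max_eq_right (not_lt.mp hdi)]
  have hdpχ : (fun i => dp i * χ i) = dp := by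
    funext i; simp only [hχ, hdp]
    split
    · simp
    · rename_i hdi; simp [max_eq_right (not_lt.mp hdi)]
  have hχdm : (fun i => χ i * dm i) = fun _ => (0:ℂ) := by
    funext i; simp only [hχ, hdm]
    split
    · rename_i hdi; simp [max_eq_right (by linarith : -d i ≤ 0)]
    · simp
  have hdmχ : (fun i => dm i * χ i) = fun _ => (0:ℂ) := by
    funext i; simp only [hχ, hdm]
    split
    · rename_i hdi; simp [max_eq_right (by linarith : -d i ≤ 0)]
    · simp
  have hχχ : (fun i => χ i * χ i) = χ := by
    funext i; simp only [hχ]; split <;> simp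
  refine ⟨U * diagonal dp * Uᴴ, U * diagonal dm * Uᴴ, U * diagonal χ * Uᴴ, ?_, ?_, ?_, ?_, ?_, ?_, ?_, ?_, ?_⟩
  · exact (posSemidef_diagonal_iff.mpr fun i => by
      simpa [hdp] using Complex.zero_le_real.mpr (le_max_right _ _)).mul_mul_conjTranspose_same U
  · exact (posSemidef_diagonal_iff.mpr fun i => by
      simpa [hdm] using Complex.zero_le_real.mpr (le_max_right _ _)).mul_mul_conjTranspose_same U
  · have : (RCLike.ofReal ∘ d : n → ℂ) = fun i => dp i - dm i := by
      funext i
      show ((d i : ℝ) : ℂ) = _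
      simp only [hdp, hdm]
      rw [← Complex.ofReal_sub, max_zero_sub_max_neg_zero_eq_self]
    rw [hspec, this, ← diagonal_sub]
    noncomm_ring
  · have : star χ = χ := by
      funext i; simp only [hχ, Pi.star_apply]; split <;> simp
    simp only [conjTranspose_mul, conjTranspose_conjTranspose, diagonal_conjTranspose, this,
      Matrix.mul_assoc]
  · rw [sandwich, hχχ]
  · rw [sandwich, hχdp]
  · rw [sandwich, hdpχ]
  · rw [sandwich, hχdm]
    simp
  · rw [sandwich, hdmχ]
    simp


lemma fix_herm_decomp (hK1 : ∑ i, (K i)ᴴ * K i = 1) (H : Matrix n n ℂ)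
    (hH : H.IsHermitian) (hfix : Ch K H = H) :
    ∃ Hp Hm : Matrix n n ℂ, Hp.PosSemidef ∧ Hm.PosSemidef ∧
      Ch K Hp = Hp ∧ Ch K Hm = Hm ∧ H = Hp - Hm := by
  obtain ⟨Hp, Hm, Pp, hHp, hHm, hsub, hPh, hPP, hPHp, hHpP, hPHm, hHmP⟩ := herm_parts H hH
  have hQh : (1 - Pp)ᴴ = 1 - Pp := by
    rw [conjTranspose_sub, hPh, conjTranspose_one]
  have hQQ : (1 - Pp) * (1 - Pp) = 1 - Pp := by
    simp [sub_mul, mul_sub, hPP]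
  set X := Ch K Hp with hX
  set Y := Ch K Hm with hY
  have hXpsd : X.PosSemidef := Ch_psd K hHp
  have hYpsd : Y.PosSemidef := Ch_psd K hHm
  have hXY : X = H + Y := by
    have h0 : X - Y = H := by rw [hX, hY, ← Ch_sub, ← hsub, hfix]
    rw [← h0]; abel
  have htrX : X.trace = Hp.trace := Ch_trace K hK1 Hp
  have hsplit : ∀ M : Matrix n n ℂ,
      (Pp * M * Pp).trace + ((1 - Pp) * M * (1 - Pp)).trace = M.trace := by
    intro M
    have e1 : (Pp * M * Pp).trace = (Pp * M).trace := by
      rw [Matrix.trace_mul_cycle, hPP]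
    have e2 : ((1 - Pp) * M * (1 - Pp)).trace = ((1 - Pp) * M).trace := by
      rw [Matrix.trace_mul_cycle, hQQ]
    rw [e1, e2, sub_mul, one_mul, Matrix.trace_sub]
    ring
  -- compute Pp * X * Pp
  have hPHPp : Pp * H * Pp = Hp := by
    rw [hsub, mul_sub, sub_mul, hPHm, Matrix.zero_mul, sub_zero, Matrix.mul_assoc, hHpP, hPHp]
  have hPXP : Pp * X * Pp = Hp + Pp * Y * Pp := by
    rw [hXY, mul_add, add_mul, hPHPp]
  have hsum : ((1 - Pp) * X * (1 - Pp)).trace + (Pp * Y * Pp).trace = 0 := by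
    have h := hsplit X
    rw [hPXP, htrX, Matrix.trace_add] at h
    linear_combination h
  have hXQpsd : ((1 - Pp) * X * (1 - Pp)).PosSemidef := by
    have := hXpsd.mul_mul_conjTranspose_same (1 - Pp)
    rwa [hQh] at this
  have hYPpsd : (Pp * Y * Pp).PosSemidef := by
    have := hYpsd.mul_mul_conjTranspose_same Pp
    rwa [hPh] at this
  have ht0nn : 0 ≤ ((1 - Pp) * X * (1 - Pp)).trace := psd_trace_nonneg hXQpsd
  have ht1nn : 0 ≤ (Pp * Y * Pp).trace := psd_trace_nonneg hYPpsd
  have ht0z : ((1 - Pp) * X * (1 - Pp)).trace = 0 := le_antisymm (by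
    have h : ((1 - Pp) * X * (1 - Pp)).trace = -(Pp * Y * Pp).trace := by linear_combination hsum
    rw [h]
    exact neg_nonpos.mpr ht1nn) ht0nn
  have ht1z : (Pp * Y * Pp).trace = 0 := by linear_combination hsum - ht0z
  obtain ⟨hq1, hq2⟩ := psd_corner hXpsd hQh ht0z
  obtain ⟨hp1, hp2⟩ := psd_corner hYpsd hPh ht1z
  have hXPp : X * Pp = X := by
    have : X * (1 - Pp) = X - X * Pp := by rw [mul_sub, mul_one]
    rw [this] at hq2
    have := sub_eq_zero.mp hq2
    exact this.symm
  have hPpX : Pp * X = X := by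
    have : (1 - Pp) * X = X - Pp * X := by rw [sub_mul, one_mul]
    rw [this] at hq1
    exact (sub_eq_zero.mp hq1).symm
  have hXfix : X = Hp := by
    have : X = Pp * X * Pp := by rw [Matrix.mul_assoc, hXPp, hPpX]
    rw [this, hPXP, hp1, Matrix.zero_mul, add_zero]
  have hYfix : Y = Hm := by
    have : Y = X - H := by rw [hXY]; abel
    rw [this, hXfix, hsub]; abel
  exact ⟨Hp, Hm, hHp, hHm, hXfix, hYfix, hsub⟩


lemma cornerA_psd (hK1 : ∑ i, (K i)ᴴ * K i = 1) (S Sinv : Matrix n n ℂ)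
    (hSh : Sᴴ = S) (hSinvh : Sinvᴴ = Sinv) (h1 : S * Sinv * S = S) (h3 : S * Sinv = Sinv * S)
    (hEfix : Ch K (S * S) = S * S) (B : Matrix n n ℂ) (hB : B.PosSemidef)
    (hfix : Ch K B = B) :
    Ch K (S * Sinv * B * (S * Sinv)) = S * Sinv * B * (S * Sinv) := by
  set P : Matrix n n ℂ := S * Sinv with hPdef
  set Q : Matrix n n ℂ := 1 - P with hQdef
  have hPh : Pᴴ = P := by rw [hPdef, conjTranspose_mul, hSinvh, hSh, ← h3]
  have hPP : P * P = P := by rw [hPdef, ← Matrix.mul_assoc, h1]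
  have hPS : P * S = S := by rw [hPdef, h1]
  have hSP : S * P = S := by
    rw [h3, ← Matrix.mul_assoc, ← hPdef, hPS]
  have hQh : Qᴴ = Q := by rw [hQdef, conjTranspose_sub, conjTranspose_one, hPh]
  have hQQ : Q * Q = Q := by rw [hQdef]; simp [sub_mul, mul_sub, hPP]
  have hQS : Q * S = 0 := by rw [hQdef, sub_mul, one_mul, hPS, sub_self]
  have hSQ : S * Q = 0 := by rw [hQdef, mul_sub, mul_one, hSP, sub_self]
  have hPW0 : ∀ i, Q * K i * P = 0 ∧ P * (K i)ᴴ * Q = 0 ∧ K i * P = P * K i * P ∧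
      P * (K i)ᴴ = P * (K i)ᴴ * P := by
    -- first: Q * (K i * S) = 0
    have hQKS : ∀ i, Q * (K i * S) = 0 := by
      have hsum : ∑ i, (Q * (K i * S)) * (Q * (K i * S))ᴴ = 0 := by
        have e1 : ∀ i, (Q * (K i * S)) * (Q * (K i * S))ᴴ = Q * (K i * (S * S) * (K i)ᴴ) * Q := by
          intro i
          simp only [conjTranspose_mul, hSh, hQh]
          noncomm_ring
        rw [Finset.sum_congr rfl fun i _ => e1 i]
        have e2 : ∑ i, Q * (K i * (S * S) * (K i)ᴴ) * Q = Q * (∑ i, K i * (S * S) * (K i)ᴴ) * Q := by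
          rw [Finset.mul_sum, Finset.sum_mul]
        rw [e2]
        have e3 : (∑ i, K i * (S * S) * (K i)ᴴ) = Ch K (S * S) := rfl
        rw [e3, hEfix]
        calc Q * (S * S) * Q = (Q * S) * (S * Q) := by noncomm_ring
          _ = 0 := by rw [hQS, Matrix.zero_mul]
      apply eq_zero_of_sum_trace_eq_zero (fun i => Q * (K i * S))
      calc ∑ i, Matrix.trace ((Q * (K i * S))ᴴ * (Q * (K i * S)))
          = ∑ i, Matrix.trace ((Q * (K i * S)) * (Q * (K i * S))ᴴ) :=
            Finset.sum_congr rfl fun i _ => Matrix.trace_mul_comm _ _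
        _ = Matrix.trace (∑ i, (Q * (K i * S)) * (Q * (K i * S))ᴴ) := (Matrix.trace_sum _ _).symm
        _ = 0 := by rw [hsum, Matrix.trace_zero]
    intro i
    have hQKP : Q * K i * P = 0 := by
      have e : Q * K i * P = (Q * (K i * S)) * Sinv := by rw [hPdef]; noncomm_ring
      rw [e, hQKS, Matrix.zero_mul]
    have hPKQ : P * (K i)ᴴ * Q = 0 := by
      have := congrArg conjTranspose hQKP
      simp only [conjTranspose_mul, hPh, hQh, conjTranspose_zero] at this
      calc P * (K i)ᴴ * Q = Pᴴ * ((K i)ᴴ * Qᴴ) := by rw [hPh, hQh]; noncomm_ring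
        _ = 0 := by rw [← conjTranspose_mul, ← conjTranspose_mul, hQKP, conjTranspose_zero]
    have hKP : K i * P = P * K i * P := by
      have h' : K i * P - P * K i * P = 0 := by
        calc K i * P - P * K i * P = Q * K i * P := by rw [hQdef]; noncomm_ring
          _ = 0 := hQKP
      have := sub_eq_zero.mp h'
      exact this
    have hPK : P * (K i)ᴴ = P * (K i)ᴴ * P := by
      have h' : P * (K i)ᴴ - P * (K i)ᴴ * P = 0 := by
        calc P * (K i)ᴴ - P * (K i)ᴴ * P = P * (K i)ᴴ * Q := by rw [hQdef]; noncomm_ring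
          _ = 0 := hPKQ
      exact sub_eq_zero.mp h'
    exact ⟨hQKP, hPKQ, hKP, hPK⟩
  have hQKP := fun i => (hPW0 i).1
  have hPKQ := fun i => (hPW0 i).2.1
  have hKP := fun i => (hPW0 i).2.2.1
  have hPK := fun i => (hPW0 i).2.2.2
  have hQP : Q * P = 0 := by rw [hQdef, sub_mul, one_mul, hPP, sub_self]
  set W : Matrix n n ℂ := ∑ i, (K i)ᴴ * Q * K i with hWdef
  have hPW : P * W = 0 := by
    rw [hWdef, Finset.mul_sum]
    refine Finset.sum_eq_zero fun i _ => ?_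
    calc P * ((K i)ᴴ * Q * K i) = (P * (K i)ᴴ * Q) * K i := by noncomm_ring
      _ = 0 := by rw [hPKQ i, Matrix.zero_mul]
  have hWP : W * P = 0 := by
    rw [hWdef, Finset.sum_mul]
    refine Finset.sum_eq_zero fun i _ => ?_
    calc (K i)ᴴ * Q * K i * P = (K i)ᴴ * Q * (K i * P) := by noncomm_ring
      _ = (K i)ᴴ * Q * (P * K i * P) := by rw [hKP i]
      _ = (K i)ᴴ * ((Q * P) * (K i * P)) := by noncomm_ring
      _ = 0 := by rw [hQP, Matrix.zero_mul, Matrix.mul_zero]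
  set R : Matrix n n ℂ := hB.sqrt with hRdef
  have hRR : R * R = B := hB.sqrt_mul_self
  have hRh : Rᴴ = R := hB.posSemidef_sqrt.1
  have hTrQB : Matrix.trace (W * B) = Matrix.trace (Q * B) := by
    conv_rhs => rw [← hfix]
    rw [Ch, Finset.mul_sum, Matrix.trace_sum, hWdef, Finset.sum_mul, Matrix.trace_sum]
    refine Finset.sum_congr rfl fun i _ => ?_
    calc Matrix.trace ((K i)ᴴ * Q * K i * B)
        = Matrix.trace ((K i)ᴴ * (Q * K i * B)) := by congr 1; noncomm_ring
      _ = Matrix.trace ((Q * K i * B) * (K i)ᴴ) := Matrix.trace_mul_comm _ _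
      _ = Matrix.trace (Q * (K i * B * (K i)ᴴ)) := by congr 1; noncomm_ring
  have hTrQBQW : Matrix.trace (Q * B * Q * W) = Matrix.trace (W * B) := by
    have hQBQ : Q * B * Q * W = B * W - P * B * W - B * P * W + P * (B * P) * W := by
      rw [hQdef]; noncomm_ring
    rw [hQBQ, Matrix.trace_add, Matrix.trace_sub, Matrix.trace_sub]
    have z1 : Matrix.trace (P * B * W) = 0 := by
      rw [Matrix.trace_mul_cycle, hWP, Matrix.zero_mul, Matrix.trace_zero]
    have z2 : Matrix.trace (B * P * W) = 0 := by
      rw [Matrix.mul_assoc, hPW, Matrix.mul_zero, Matrix.trace_zero]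
    have z3 : Matrix.trace (P * (B * P) * W) = 0 := by
      have e : P * (B * P) * W = P * B * (P * W) := by noncomm_ring
      rw [e, hPW, Matrix.mul_zero, Matrix.trace_zero]
    rw [z1, z2, z3, Matrix.trace_mul_comm]
    ring
  have hτ : ∀ i, P * K i * Q * R = 0 := by
    apply eq_zero_of_sum_trace_eq_zero (fun i => P * K i * Q * R)
    have e1 : ∀ i, (P * K i * Q * R)ᴴ * (P * K i * Q * R)
        = (R * Q) * ((K i)ᴴ * P * K i) * (Q * R) := by
      intro i
      have ha : (P * K i * Q * R)ᴴ = R * Q * (K i)ᴴ * P := by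
        simp only [conjTranspose_mul, hRh, hQh, hPh]
        noncomm_ring
      rw [ha]
      calc R * Q * (K i)ᴴ * P * (P * K i * Q * R)
          = (R * Q) * ((K i)ᴴ * (P * P) * K i) * (Q * R) := by noncomm_ring
        _ = (R * Q) * ((K i)ᴴ * P * K i) * (Q * R) := by rw [hPP]
    simp only [e1]
    have e2 : ∑ i, Matrix.trace ((R * Q) * ((K i)ᴴ * P * K i) * (Q * R))
        = Matrix.trace ((R * Q) * (∑ i, (K i)ᴴ * P * K i) * (Q * R)) := by
      rw [Finset.mul_sum, Finset.sum_mul, Matrix.trace_sum]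
    rw [e2]
    have e3 : (∑ i, (K i)ᴴ * P * K i) = 1 - W := by
      rw [hWdef]
      have e3' : ∀ i, (K i)ᴴ * P * K i = (K i)ᴴ * K i - (K i)ᴴ * Q * K i := by
        intro i; rw [hQdef]; noncomm_ring
      rw [Finset.sum_congr rfl fun i _ => e3' i, Finset.sum_sub_distrib, hK1]
    rw [e3]
    have e4 : (R * Q) * (1 - W) * (Q * R) = R * (Q * Q) * R - (R * Q) * W * (Q * R) := by
      noncomm_ring
    rw [e4, Matrix.trace_sub, hQQ]
    have f1 : Matrix.trace (R * Q * R) = Matrix.trace (Q * B) := by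
      rw [Matrix.trace_mul_cycle, hRR, Matrix.trace_mul_comm]
    have f2 : Matrix.trace ((R * Q) * W * (Q * R)) = Matrix.trace (Q * B * Q * W) := by
      rw [Matrix.trace_mul_comm]
      congr 1
      rw [← hRR]; noncomm_ring
    rw [f1, f2]
    linear_combination -hTrQBQW - hTrQB
  have hMB : ∀ i, P * K i * Q * B = 0 := by
    intro i
    have e : P * K i * Q * B = (P * K i * Q * R) * R := by rw [← hRR]; noncomm_ring
    rw [e, hτ i, Matrix.zero_mul]
  have hBM : ∀ i, B * Q * (K i)ᴴ * P = 0 := by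
    intro i
    calc B * Q * (K i)ᴴ * P = (P * K i * Q * B)ᴴ := by
          simp only [conjTranspose_mul, hPh, hQh, hB.1.eq]
          noncomm_ring
      _ = 0 := by rw [hMB i, conjTranspose_zero]
  have hstep : ∀ i, K i * (P * B * P) * (K i)ᴴ = P * (K i * B * (K i)ᴴ) * P := by
    intro i
    have l1 : K i * (P * B * P) * (K i)ᴴ = (K i * P) * B * (P * (K i)ᴴ) := by noncomm_ring
    rw [l1, hKP i, hPK i]
    have expand : P * (K i * B * (K i)ᴴ) * P = P * K i * P * B * (P * (K i)ᴴ * P)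
        + (P * K i * P) * (B * Q * (K i)ᴴ * P)
        + (P * K i * Q * B) * (P * (K i)ᴴ * P)
        + (P * K i * Q * B) * (Q * (K i)ᴴ * P) := by
      rw [hQdef]; noncomm_ring
    rw [expand, hMB i, hBM i]
    simp [Matrix.mul_assoc]
  calc Ch K (P * B * P) = ∑ i, K i * (P * B * P) * (K i)ᴴ := rfl
    _ = ∑ i, P * (K i * B * (K i)ᴴ) * P := Finset.sum_congr rfl fun i _ => hstep i
    _ = P * (∑ i, K i * B * (K i)ᴴ) * P := by rw [Finset.mul_sum, Finset.sum_mul]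
    _ = P * B * P := by rw [show (∑ i, K i * B * (K i)ᴴ) = Ch K B from rfl, hfix]


lemma cornerA (hK1 : ∑ i, (K i)ᴴ * K i = 1) (S Sinv : Matrix n n ℂ)
    (hSh : Sᴴ = S) (hSinvh : Sinvᴴ = Sinv) (h1 : S * Sinv * S = S) (h3 : S * Sinv = Sinv * S)
    (hEfix : Ch K (S * S) = S * S) (B : Matrix n n ℂ) (hfix : Ch K B = B) :
    Ch K (S * Sinv * B * (S * Sinv)) = S * Sinv * B * (S * Sinv) := by
  have key : ∀ M : Matrix n n ℂ, M.IsHermitian → Ch K M = M →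
      Ch K (S * Sinv * M * (S * Sinv)) = S * Sinv * M * (S * Sinv) := by
    intro M hM hMfix
    obtain ⟨Mp, Mm, hp, hm, hfp, hfm, hsub⟩ := fix_herm_decomp K hK1 M hM hMfix
    have cp := cornerA_psd K hK1 S Sinv hSh hSinvh h1 h3 hEfix Mp hp hfp
    have cm := cornerA_psd K hK1 S Sinv hSh hSinvh h1 h3 hEfix Mm hm hfm
    rw [hsub]
    have e : S * Sinv * (Mp - Mm) * (S * Sinv)
        = S * Sinv * Mp * (S * Sinv) - S * Sinv * Mm * (S * Sinv) := by noncomm_ring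
    rw [e, Ch_sub, cp, cm]
  have hfixct : Ch K Bᴴ = Bᴴ := by rw [Ch_ct, hfix]
  set c : ℂ := 2⁻¹ * Complex.I⁻¹ with hc
  have hcstar : star c = -c := by
    rw [hc, Complex.star_def, _root_.map_mul, map_inv₀, map_inv₀, Complex.conj_I, Complex.conj_ofNat]
    ring
  have h2star : star (2⁻¹ : ℂ) = (2⁻¹ : ℂ) := by
    rw [Complex.star_def, map_inv₀, Complex.conj_ofNat]
  set Hr : Matrix n n ℂ := (2⁻¹ : ℂ) • (B + Bᴴ) with hHr
  set Hi : Matrix n n ℂ := c • (B - Bᴴ) with hHi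
  have hHrherm : Hr.IsHermitian := by
    show Hrᴴ = Hr
    rw [hHr, conjTranspose_smul, conjTranspose_add, conjTranspose_conjTranspose, h2star,
      add_comm]
  have hHiherm : Hi.IsHermitian := by
    show Hiᴴ = Hi
    rw [hHi, conjTranspose_smul, conjTranspose_sub, conjTranspose_conjTranspose, hcstar,
      neg_smul, ← smul_neg, neg_sub]
  have hfr : Ch K Hr = Hr := by rw [hHr, Ch_smul, Ch_add, hfix, hfixct]
  have hfi : Ch K Hi = Hi := by rw [hHi, Ch_smul, Ch_sub, hfix, hfixct]
  have hIc : Complex.I * c = 2⁻¹ := by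
    rw [hc, ← mul_assoc, mul_comm Complex.I, mul_assoc, mul_inv_cancel₀ Complex.I_ne_zero,
      mul_one]
  have hBdecomp : B = Hr + Complex.I • Hi := by
    rw [hHr, hHi, smul_smul, hIc, smul_add, smul_sub]
    module
  conv_lhs => rw [hBdecomp]
  conv_rhs => rw [hBdecomp]
  have e2 : S * Sinv * (Hr + Complex.I • Hi) * (S * Sinv)
      = S * Sinv * Hr * (S * Sinv) + Complex.I • (S * Sinv * Hi * (S * Sinv)) := by
    simp only [Matrix.mul_add, Matrix.add_mul, Matrix.mul_smul, Matrix.smul_mul]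
  rw [e2, Ch_add, Ch_smul, key Hr hHrherm hfr, key Hi hHiherm hfi]


lemma KS_eq (S Sinv : Matrix n n ℂ) (hSh : Sᴴ = S) (hSinvh : Sinvᴴ = Sinv)
    (h1 : S * Sinv * S = S) (h3 : S * Sinv = Sinv * S)
    (hEfix : Ch K (S * S) = S * S) : ∀ i, K i * S = (S * Sinv) * (K i * S) := by
  set P : Matrix n n ℂ := S * Sinv with hPdef
  set Q : Matrix n n ℂ := 1 - P with hQdef
  have hPh : Pᴴ = P := by rw [hPdef, conjTranspose_mul, hSinvh, hSh, ← h3]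
  have hPS : P * S = S := h1
  have hQh : Qᴴ = Q := by rw [hQdef, conjTranspose_sub, conjTranspose_one, hPh]
  have hQS : Q * S = 0 := by rw [hQdef, sub_mul, one_mul, hPS, sub_self]
  have hQKS : ∀ i, Q * (K i * S) = 0 := by
    have hsum : ∑ i, (Q * (K i * S)) * (Q * (K i * S))ᴴ = 0 := by
      have e1 : ∀ i, (Q * (K i * S)) * (Q * (K i * S))ᴴ = Q * (K i * (S * S) * (K i)ᴴ) * Q := by
        intro i
        simp only [conjTranspose_mul, hSh, hQh]
        noncomm_ring
      rw [Finset.sum_congr rfl fun i _ => e1 i]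
      have e2 : ∑ i, Q * (K i * (S * S) * (K i)ᴴ) * Q = Q * (∑ i, K i * (S * S) * (K i)ᴴ) * Q := by
        rw [Finset.mul_sum, Finset.sum_mul]
      rw [e2]
      have e3 : (∑ i, K i * (S * S) * (K i)ᴴ) = Ch K (S * S) := rfl
      rw [e3, hEfix]
      calc Q * (S * S) * Q = (Q * S) * (S * Q) := by noncomm_ring
        _ = 0 := by rw [hQS, Matrix.zero_mul]
    apply eq_zero_of_sum_trace_eq_zero (fun i => Q * (K i * S))
    calc ∑ i, Matrix.trace ((Q * (K i * S))ᴴ * (Q * (K i * S)))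
        = ∑ i, Matrix.trace ((Q * (K i * S)) * (Q * (K i * S))ᴴ) :=
          Finset.sum_congr rfl fun i _ => Matrix.trace_mul_comm _ _
      _ = Matrix.trace (∑ i, (Q * (K i * S)) * (Q * (K i * S))ᴴ) := (Matrix.trace_sum _ _).symm
      _ = 0 := by rw [hsum, Matrix.trace_zero]
  intro i
  have h' : K i * S - P * (K i * S) = 0 := by
    calc K i * S - P * (K i * S) = Q * (K i * S) := by rw [hQdef]; noncomm_ring
      _ = 0 := hQKS i
  exact (sub_eq_zero.mp h')

lemma commutant_lemma (G : ι → Matrix n n ℂ) (S Sinv : Matrix n n ℂ) (hSh : Sᴴ = S)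
    (hGE : ∑ i, (G i)ᴴ * (S * S) * G i = S * S)
    (hGG : ∑ i, G i * (G i)ᴴ = S * Sinv)
    (hGP : ∀ i, (G i)ᴴ * (S * Sinv) = (G i)ᴴ)
    (Y : Matrix n n ℂ)
    (hY : ∑ i, G i * Y * (G i)ᴴ = Y)
    (hYc : ∑ i, G i * Yᴴ * (G i)ᴴ = Yᴴ)
    (hYP : Y * (S * Sinv) = Y)
    (hYsP : Yᴴ * (S * Sinv) = Yᴴ) :
    ∀ i, (G i)ᴴ * Y = Y * (G i)ᴴ := by
  set D : ι → Matrix n n ℂ := fun i => (G i)ᴴ * Y - Y * (G i)ᴴ with hDdef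
  have hsum : ∑ i, (D i)ᴴ * D i = (∑ i, G i * (Yᴴ * Y) * (G i)ᴴ) - Yᴴ * Y := by
    have e : ∀ i, (D i)ᴴ * D i = G i * (Yᴴ * Y) * (G i)ᴴ + Yᴴ * (G i * (G i)ᴴ) * Y
        - Yᴴ * (G i * Y * (G i)ᴴ) - (G i * Yᴴ * (G i)ᴴ) * Y := by
      intro i
      rw [hDdef]
      simp only [conjTranspose_sub, conjTranspose_mul, conjTranspose_conjTranspose]
      noncomm_ring
    rw [Finset.sum_congr rfl fun i _ => e i, Finset.sum_sub_distrib, Finset.sum_sub_distrib,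
      Finset.sum_add_distrib]
    have t2 : ∑ i, Yᴴ * (G i * (G i)ᴴ) * Y = Yᴴ * Y := by
      have : ∑ i, Yᴴ * (G i * (G i)ᴴ) * Y = Yᴴ * (∑ i, G i * (G i)ᴴ) * Y := by
        rw [Finset.mul_sum, Finset.sum_mul]
      rw [this, hGG, hYsP]
    have t3 : ∑ i, Yᴴ * (G i * Y * (G i)ᴴ) = Yᴴ * Y := by
      rw [← Finset.mul_sum, hY]
    have t4 : ∑ i, (G i * Yᴴ * (G i)ᴴ) * Y = Yᴴ * Y := by
      rw [← Finset.sum_mul, hYc]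
    rw [t2, t3, t4]
    abel
  have htr : Matrix.trace ((S * S) * ((∑ i, G i * (Yᴴ * Y) * (G i)ᴴ) - Yᴴ * Y)) = 0 := by
    rw [Matrix.mul_sub, Matrix.trace_sub]
    have hT : Matrix.trace ((S * S) * ∑ i, G i * (Yᴴ * Y) * (G i)ᴴ)
        = Matrix.trace ((S * S) * (Yᴴ * Y)) := by
      rw [Finset.mul_sum, Matrix.trace_sum]
      have per : ∀ i, Matrix.trace ((S * S) * (G i * (Yᴴ * Y) * (G i)ᴴ))
          = Matrix.trace (((G i)ᴴ * (S * S) * G i) * (Yᴴ * Y)) := by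
        intro i
        calc Matrix.trace ((S * S) * (G i * (Yᴴ * Y) * (G i)ᴴ))
            = Matrix.trace (((S * S) * G i * (Yᴴ * Y)) * (G i)ᴴ) := by congr 1; noncomm_ring
          _ = Matrix.trace ((G i)ᴴ * ((S * S) * G i * (Yᴴ * Y))) := Matrix.trace_mul_comm _ _
          _ = Matrix.trace (((G i)ᴴ * (S * S) * G i) * (Yᴴ * Y)) := by congr 1; noncomm_ring
      rw [Finset.sum_congr rfl fun i _ => per i]
      have : ∑ i, Matrix.trace (((G i)ᴴ * (S * S) * G i) * (Yᴴ * Y))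
          = Matrix.trace ((∑ i, (G i)ᴴ * (S * S) * G i) * (Yᴴ * Y)) := by
        rw [Finset.sum_mul, Matrix.trace_sum]
      rw [this, hGE]
    rw [hT, sub_self]
  have hDzero : ∀ i, D i * S = 0 := by
    apply eq_zero_of_sum_trace_eq_zero (fun i => D i * S)
    have per : ∀ i, Matrix.trace ((D i * S)ᴴ * (D i * S))
        = Matrix.trace ((S * S) * ((D i)ᴴ * D i)) := by
      intro i
      calc Matrix.trace ((D i * S)ᴴ * (D i * S))
          = Matrix.trace ((S * ((D i)ᴴ * D i)) * S) := by
            rw [conjTranspose_mul, hSh]; congr 1; noncomm_ring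
        _ = Matrix.trace (S * (S * ((D i)ᴴ * D i))) := Matrix.trace_mul_comm _ _
        _ = Matrix.trace ((S * S) * ((D i)ᴴ * D i)) := by congr 1; noncomm_ring
    rw [Finset.sum_congr rfl fun i _ => per i, ← Matrix.trace_sum, ← Finset.mul_sum, hsum, htr]
  intro i
  have hDP : D i * (S * Sinv) = D i := by
    rw [hDdef]
    show ((G i)ᴴ * Y - Y * (G i)ᴴ) * (S * Sinv) = (G i)ᴴ * Y - Y * (G i)ᴴ
    rw [sub_mul, Matrix.mul_assoc ((G i)ᴴ) Y, hYP, Matrix.mul_assoc Y ((G i)ᴴ), hGP i]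
  have : D i = 0 := by
    calc D i = D i * (S * Sinv) := hDP.symm
      _ = (D i * S) * Sinv := by rw [Matrix.mul_assoc]
      _ = 0 := by rw [hDzero i, Matrix.zero_mul]
  have h0 : (G i)ᴴ * Y - Y * (G i)ᴴ = 0 := this
  exact sub_eq_zero.mp h0

end FixedPointAlgebraAux

open FixedPointAlgebraAux

/-- A linear map on matrices is a quantum channel if it admits a Kraus representation
`Φ(A) = ∑ i, K i * A * (K i)ᴴ` with `∑ i (K i)ᴴ * K i = 1` (so that it is completely
positive and trace preserving). -/
def IsQuantumChannel {n : Type*} [Fintype n] [DecidableEq n]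
    (Φ : Matrix n n ℂ →ₗ[ℂ] Matrix n n ℂ) : Prop :=
  ∃ (ι : Type) (_ : Fintype ι) (K : ι → Matrix n n ℂ),
    (∀ A, Φ A = ∑ i, K i * A * (K i)ᴴ) ∧ (∑ i, (K i)ᴴ * K i = 1)

/-- **The algebra associated to the fixed points of a channel.**
Let `Φ` be a quantum channel on a finite-dimensional space, `Fix(Φ)` its set of fixed
points, `A_x` (for `x` in a measure space with nonnegative measure `μ`) a family of
positive semidefinite fixed points, and `E = ∫ A_x μ(dx)` (entrywise).  Let `S = E^{1/2}`
be the positive square root of `E` and `Sinv = E^{-1/2}` its inverse on the support of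
`E`.  Then the set `𝒜 = E^{-1/2} Fix(Φ) E^{-1/2}` is a matrix `*`-algebra — closed under
linear combinations, products, and adjoints — and moreover `E^{1/2} 𝒜 E^{1/2} ⊆ Fix(Φ)`. -/
theorem fixed_point_algebra {n : Type*} [Fintype n] [DecidableEq n]
    (Φ : Matrix n n ℂ →ₗ[ℂ] Matrix n n ℂ) (hΦ : IsQuantumChannel Φ)
    {X : Type*} [MeasurableSpace X] (μ : Measure X)
    (A : X → Matrix n n ℂ)
    (hA_int : ∀ i j, Integrable (fun x => A x i j) μ)
    (hA_psd : ∀ x, (A x).PosSemidef)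
    (hA_fix : ∀ x, Φ (A x) = A x)
    (E : Matrix n n ℂ) (hE : E = Matrix.of fun i j => ∫ x, A x i j ∂μ)
    (S : Matrix n n ℂ) (hS : S.PosSemidef) (hSE : S * S = E)
    (Sinv : Matrix n n ℂ) (hSinv : Sinv.PosSemidef)
    (hSinv1 : S * Sinv * S = S) (hSinv2 : Sinv * S * Sinv = Sinv)
    (hSinv3 : Commute S Sinv) :
    (∀ B C : Matrix n n ℂ, Φ B = B → Φ C = C → ∀ a b : ℂ,
        ∃ F : Matrix n n ℂ, Φ F = F ∧
          a • (Sinv * B * Sinv) + b • (Sinv * C * Sinv) = Sinv * F * Sinv) ∧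
    (∀ B C : Matrix n n ℂ, Φ B = B → Φ C = C →
        ∃ F : Matrix n n ℂ, Φ F = F ∧
          (Sinv * B * Sinv) * (Sinv * C * Sinv) = Sinv * F * Sinv) ∧
    (∀ B : Matrix n n ℂ, Φ B = B →
        ∃ F : Matrix n n ℂ, Φ F = F ∧ (Sinv * B * Sinv)ᴴ = Sinv * F * Sinv) ∧
    (∀ B : Matrix n n ℂ, Φ B = B → Φ (S * (Sinv * B * Sinv) * S) = S * (Sinv * B * Sinv) * S) := by
  classical
  obtain ⟨ι, instι, K, hK, hK1⟩ := hΦ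
  -- Φ fixes E
  have hrep : ∀ M : Matrix n n ℂ,
      Φ M = ∑ k : n, ∑ l : n, M k l • Φ (Matrix.single k l 1) := by
    intro M
    conv_lhs => rw [Matrix.matrix_eq_sum_single M]
    rw [map_sum]
    refine Finset.sum_congr rfl fun k _ => ?_
    rw [map_sum]
    refine Finset.sum_congr rfl fun l _ => ?_
    rw [show Matrix.single k l (M k l) = M k l • Matrix.single k l 1 by
      rw [Matrix.smul_single, smul_eq_mul, mul_one], _root_.map_smul]
  have hEentry : ∀ k l, E k l = ∫ x, A x k l ∂μ := fun k l => by rw [hE]; rfl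
  have hΦE : Φ E = E := by
    ext i j
    have lhs1 : Φ E i j = ∑ k : n, ∑ l : n,
        E k l * Φ (Matrix.single k l 1) i j := by
      rw [hrep E]
      simp [Matrix.sum_apply, Matrix.smul_apply, smul_eq_mul]
    have rhs1 : ∀ x, A x i j = ∑ k : n, ∑ l : n,
        A x k l * Φ (Matrix.single k l 1) i j := by
      intro x
      conv_lhs => rw [← hA_fix x]
      rw [hrep (A x)]
      simp [Matrix.sum_apply, Matrix.smul_apply, smul_eq_mul]
    calc Φ E i j = ∑ k : n, ∑ l : n, E k l * Φ (Matrix.single k l 1) i j := lhs1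
      _ = ∑ k : n, ∑ l : n, (∫ x, A x k l ∂μ) * Φ (Matrix.single k l 1) i j := by
          refine Finset.sum_congr rfl fun k _ => Finset.sum_congr rfl fun l _ => ?_
          rw [hEentry k l]
      _ = ∑ k : n, ∑ l : n, ∫ x, A x k l * Φ (Matrix.single k l 1) i j ∂μ := by
          refine Finset.sum_congr rfl fun k _ => Finset.sum_congr rfl fun l _ => ?_
          rw [integral_mul_const]
      _ = ∫ x, ∑ k : n, ∑ l : n, A x k l * Φ (Matrix.single k l 1) i j ∂μ := by
          rw [integral_finset_sum]
          · refine Finset.sum_congr rfl fun k _ => ?_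
            rw [integral_finset_sum]
            intro l _
            exact (hA_int k l).mul_const _
          · intro k _
            exact integrable_finset_sum _ fun l _ => (hA_int k l).mul_const _
      _ = ∫ x, A x i j ∂μ := by
          refine integral_congr_ae (Filter.Eventually.of_forall fun x => ?_)
          exact (rhs1 x).symm
      _ = E i j := (hEentry i j).symm
  -- basic algebraic facts
  have hSh : Sᴴ = S := hS.1
  have hSinvh : Sinvᴴ = Sinv := hSinv.1
  have h3 : S * Sinv = Sinv * S := hSinv3
  have hEfix : Ch K (S * S) = S * S := by
    rw [hSE]
    rw [show Ch K E = Φ E from (hK E).symm, hΦE]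
  have hfixCh : ∀ B : Matrix n n ℂ, Φ B = B → Ch K B = B := fun B hB => by
    rw [show Ch K B = Φ B from (hK B).symm, hB]
  have hChfix : ∀ B : Matrix n n ℂ, Ch K B = B → Φ B = B := fun B hB => by
    rw [hK B]; exact hB
  have corner : ∀ B : Matrix n n ℂ, Φ B = B →
      Ch K (S * Sinv * B * (S * Sinv)) = S * Sinv * B * (S * Sinv) :=
    fun B hB => cornerA K hK1 S Sinv hSh hSinvh hSinv1 h3 hEfix B (hfixCh B hB)
  have hSinvP : Sinv * (S * Sinv) = Sinv := by rw [← Matrix.mul_assoc, hSinv2]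
  have hPSinv : (S * Sinv) * Sinv = Sinv := by rw [h3, hSinv2]
  have hSand : ∀ D : Matrix n n ℂ, S * (Sinv * D * Sinv) * S = S * Sinv * D * (S * Sinv) := by
    intro D
    calc S * (Sinv * D * Sinv) * S = S * Sinv * D * (Sinv * S) := by noncomm_ring
      _ = S * Sinv * D * (S * Sinv) := by rw [← h3]
  have hctB : ∀ D : Matrix n n ℂ, (Sinv * D * Sinv)ᴴ = Sinv * Dᴴ * Sinv := by
    intro D
    simp only [conjTranspose_mul, hSinvh]
    noncomm_ring
  have hYPgen : ∀ D : Matrix n n ℂ, (Sinv * D * Sinv) * (S * Sinv) = Sinv * D * Sinv := by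
    intro D
    calc (Sinv * D * Sinv) * (S * Sinv) = Sinv * D * (Sinv * (S * Sinv)) := by noncomm_ring
      _ = Sinv * D * Sinv := by rw [hSinvP]
  have hctfix : ∀ B : Matrix n n ℂ, Φ B = B → Φ Bᴴ = Bᴴ := by
    intro B hB
    refine hChfix _ ?_
    rw [Ch_ct, hfixCh B hB]
  refine ⟨?_, ?_, ?_, ?_⟩
  · -- linear combinations
    intro B C hB hC a b
    refine ⟨a • B + b • C, by rw [map_add, _root_.map_smul, _root_.map_smul, hB, hC], ?_⟩
    simp only [Matrix.mul_add, Matrix.add_mul, Matrix.mul_smul, Matrix.smul_mul]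
  · -- products
    intro B C hB hC
    have hGct : ∀ i, (Sinv * K i * S)ᴴ = S * (K i)ᴴ * Sinv := by
      intro i
      simp only [conjTranspose_mul, hSh, hSinvh]
      noncomm_ring
    have hKS : ∀ i, K i * S = S * (Sinv * K i * S) := by
      intro i
      calc K i * S = (S * Sinv) * (K i * S) :=
            KS_eq K S Sinv hSh hSinvh hSinv1 h3 hEfix i
        _ = S * (Sinv * K i * S) := by noncomm_ring
    have hSK : ∀ i, S * (K i)ᴴ = (Sinv * K i * S)ᴴ * S := by
      intro i
      calc S * (K i)ᴴ = (K i * S)ᴴ := by rw [conjTranspose_mul, hSh]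
        _ = (S * (Sinv * K i * S))ᴴ := by rw [hKS i]
        _ = (Sinv * K i * S)ᴴ * S := by rw [conjTranspose_mul, hSh]
    have hmid : Sinv * (S * S) * Sinv = S * Sinv := by
      calc Sinv * (S * S) * Sinv = (Sinv * S) * (S * Sinv) := by noncomm_ring
        _ = (S * Sinv) * (S * Sinv) := by rw [← h3]
        _ = S * Sinv := by rw [← Matrix.mul_assoc, hSinv1]
    have hGG : ∑ i, (Sinv * K i * S) * (Sinv * K i * S)ᴴ = S * Sinv := by
      have per : ∀ i, (Sinv * K i * S) * (Sinv * K i * S)ᴴ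
          = Sinv * (K i * (S * S) * (K i)ᴴ) * Sinv := by
        intro i
        rw [hGct i]
        noncomm_ring
      rw [Finset.sum_congr rfl fun i _ => per i,
        show ∑ i, Sinv * (K i * (S * S) * (K i)ᴴ) * Sinv
            = Sinv * (∑ i, K i * (S * S) * (K i)ᴴ) * Sinv from by
          rw [Finset.mul_sum, Finset.sum_mul],
        show (∑ i, K i * (S * S) * (K i)ᴴ) = Ch K (S * S) from rfl, hEfix, hmid]
    have hGE : ∑ i, (Sinv * K i * S)ᴴ * (S * S) * (Sinv * K i * S) = S * S := by
      have per : ∀ i, (Sinv * K i * S)ᴴ * (S * S) * (Sinv * K i * S)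
          = S * ((K i)ᴴ * K i) * S := by
        intro i
        calc (Sinv * K i * S)ᴴ * (S * S) * (Sinv * K i * S)
            = (S * (K i)ᴴ * Sinv) * (S * S) * (Sinv * K i * S) := by rw [hGct i]
          _ = (S * (K i)ᴴ) * (Sinv * (S * S) * Sinv) * (K i * S) := by noncomm_ring
          _ = (S * (K i)ᴴ) * ((S * Sinv) * (K i * S)) := by
              rw [hmid]; noncomm_ring
          _ = (S * (K i)ᴴ) * (K i * S) := by
              rw [← KS_eq K S Sinv hSh hSinvh hSinv1 h3 hEfix i]
          _ = S * ((K i)ᴴ * K i) * S := by noncomm_ring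
      rw [Finset.sum_congr rfl fun i _ => per i,
        show ∑ i, S * ((K i)ᴴ * K i) * S = S * (∑ i, (K i)ᴴ * K i) * S from by
          rw [Finset.mul_sum, Finset.sum_mul], hK1, Matrix.mul_one]
    have hGP : ∀ i, (Sinv * K i * S)ᴴ * (S * Sinv) = (Sinv * K i * S)ᴴ := by
      intro i
      rw [hGct i]
      calc S * (K i)ᴴ * Sinv * (S * Sinv) = S * (K i)ᴴ * (Sinv * (S * Sinv)) := by noncomm_ring
        _ = S * (K i)ᴴ * Sinv := by rw [hSinvP]
    have hTfix : ∀ D : Matrix n n ℂ, Φ D = D →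
        ∑ i, (Sinv * K i * S) * (Sinv * D * Sinv) * (Sinv * K i * S)ᴴ = Sinv * D * Sinv := by
      intro D hD
      have hcorCh := corner D hD
      have per : ∀ i, (Sinv * K i * S) * (Sinv * D * Sinv) * (Sinv * K i * S)ᴴ
          = Sinv * (K i * (S * Sinv * D * (S * Sinv)) * (K i)ᴴ) * Sinv := by
        intro i
        rw [← hSand D, hGct i]
        noncomm_ring
      rw [Finset.sum_congr rfl fun i _ => per i,
        show ∑ i, Sinv * (K i * (S * Sinv * D * (S * Sinv)) * (K i)ᴴ) * Sinv
            = Sinv * (∑ i, K i * (S * Sinv * D * (S * Sinv)) * (K i)ᴴ) * Sinv from by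
          rw [Finset.mul_sum, Finset.sum_mul],
        show (∑ i, K i * (S * Sinv * D * (S * Sinv)) * (K i)ᴴ)
            = Ch K (S * Sinv * D * (S * Sinv)) from rfl, hcorCh]
      calc Sinv * (S * Sinv * D * (S * Sinv)) * Sinv
          = (Sinv * (S * Sinv)) * D * ((S * Sinv) * Sinv) := by noncomm_ring
        _ = Sinv * D * Sinv := by rw [hSinvP, hPSinv]
    have hBct := hctfix B hB
    have c2 : ∀ i, (Sinv * K i * S)ᴴ * (Sinv * Bᴴ * Sinv)
        = (Sinv * Bᴴ * Sinv) * (Sinv * K i * S)ᴴ := by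
      apply commutant_lemma (fun i => Sinv * K i * S) S Sinv hSh hGE hGG hGP
      · exact hTfix Bᴴ hBct
      · rw [hctB Bᴴ, conjTranspose_conjTranspose]
        exact hTfix B hB
      · exact hYPgen Bᴴ
      · rw [hctB Bᴴ, conjTranspose_conjTranspose]
        exact hYPgen B
    have hGY : ∀ i, (Sinv * K i * S) * (Sinv * B * Sinv)
        = (Sinv * B * Sinv) * (Sinv * K i * S) := by
      intro i
      calc (Sinv * K i * S) * (Sinv * B * Sinv)
          = ((Sinv * B * Sinv)ᴴ * (Sinv * K i * S)ᴴ)ᴴ := by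
            rw [← conjTranspose_mul, conjTranspose_conjTranspose]
        _ = ((Sinv * Bᴴ * Sinv) * (Sinv * K i * S)ᴴ)ᴴ := by rw [hctB B]
        _ = ((Sinv * K i * S)ᴴ * (Sinv * Bᴴ * Sinv))ᴴ := by rw [c2 i]
        _ = (Sinv * B * Sinv) * (Sinv * K i * S) := by
            rw [conjTranspose_mul, conjTranspose_conjTranspose, hctB Bᴴ,
              conjTranspose_conjTranspose]
    refine ⟨S * ((Sinv * B * Sinv) * (Sinv * C * Sinv)) * S, ?_, ?_⟩
    · rw [hK]
      have per : ∀ i, K i * (S * ((Sinv * B * Sinv) * (Sinv * C * Sinv)) * S) * (K i)ᴴ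
          = S * ((Sinv * K i * S) * ((Sinv * B * Sinv) * (Sinv * C * Sinv))
              * (Sinv * K i * S)ᴴ) * S := by
        intro i
        calc K i * (S * ((Sinv * B * Sinv) * (Sinv * C * Sinv)) * S) * (K i)ᴴ
            = (K i * S) * ((Sinv * B * Sinv) * (Sinv * C * Sinv)) * (S * (K i)ᴴ) := by
              noncomm_ring
          _ = (S * (Sinv * K i * S)) * ((Sinv * B * Sinv) * (Sinv * C * Sinv))
              * ((Sinv * K i * S)ᴴ * S) := by rw [hKS i, hSK i]
          _ = S * ((Sinv * K i * S) * ((Sinv * B * Sinv) * (Sinv * C * Sinv))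
              * (Sinv * K i * S)ᴴ) * S := by noncomm_ring
      rw [Finset.sum_congr rfl fun i _ => per i,
        show ∑ i, S * ((Sinv * K i * S) * ((Sinv * B * Sinv) * (Sinv * C * Sinv))
              * (Sinv * K i * S)ᴴ) * S
            = S * (∑ i, (Sinv * K i * S) * ((Sinv * B * Sinv) * (Sinv * C * Sinv))
              * (Sinv * K i * S)ᴴ) * S from by rw [Finset.mul_sum, Finset.sum_mul]]
      have key : ∑ i, (Sinv * K i * S) * ((Sinv * B * Sinv) * (Sinv * C * Sinv))
          * (Sinv * K i * S)ᴴ = (Sinv * B * Sinv) * (Sinv * C * Sinv) := by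
        have per2 : ∀ i, (Sinv * K i * S) * ((Sinv * B * Sinv) * (Sinv * C * Sinv))
            * (Sinv * K i * S)ᴴ
            = (Sinv * B * Sinv) * ((Sinv * K i * S) * (Sinv * C * Sinv)
              * (Sinv * K i * S)ᴴ) := by
          intro i
          calc (Sinv * K i * S) * ((Sinv * B * Sinv) * (Sinv * C * Sinv)) * (Sinv * K i * S)ᴴ
              = ((Sinv * K i * S) * (Sinv * B * Sinv)) * ((Sinv * C * Sinv)
                * (Sinv * K i * S)ᴴ) := by noncomm_ring
            _ = ((Sinv * B * Sinv) * (Sinv * K i * S)) * ((Sinv * C * Sinv)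
                * (Sinv * K i * S)ᴴ) := by rw [hGY i]
            _ = (Sinv * B * Sinv) * ((Sinv * K i * S) * (Sinv * C * Sinv)
                * (Sinv * K i * S)ᴴ) := by noncomm_ring
        rw [Finset.sum_congr rfl fun i _ => per2 i, ← Finset.mul_sum, hTfix C hC]
      rw [key]
    · have e : Sinv * (S * ((Sinv * B * Sinv) * (Sinv * C * Sinv)) * S) * Sinv
          = ((Sinv * S * Sinv) * B * Sinv) * (Sinv * C * (Sinv * (S * Sinv))) := by
        noncomm_ring
      rw [e, hSinv2, hSinvP]
  · -- adjoints
    intro B hB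
    exact ⟨Bᴴ, hctfix B hB, hctB B⟩
  · -- sandwiching back
    intro B hB
    have e : S * (Sinv * B * Sinv) * S = S * Sinv * B * (S * Sinv) := hSand B
    rw [e, hK]
    show Ch K (S * Sinv * B * (S * Sinv)) = S * Sinv * B * (S * Sinv)
    exact corner B hB
end

section
/- For the uniform ensemble of N-copy pure qubit states {(|n⟩⟨n|)^{⊗N}, d²n} (Haar measure on the Bloch sphere), the Holevo χ quantity equals log(N+1). -/
open Matrix Real

/-- The pure qubit state with Bloch vector given by spherical angles `(θ, φ)`:
`|n⟩ = (cos(θ/2), e^{iφ} sin(θ/2))`. -/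
noncomputable def blochVec (θ φ : ℝ) : Fin 2 → ℂ :=
  fun i => if i = 0 then (Real.cos (θ / 2) : ℂ)
           else Complex.exp (Complex.I * (φ : ℂ)) * (Real.sin (θ / 2) : ℂ)

/-- The average of the `N`-copy pure states `(|n⟩⟨n|)^{⊗N}` over the uniform (Haar)
measure on the Bloch sphere, written in spherical coordinates with density
`sin θ / (4π)`. -/
noncomputable def avgPureState (N : ℕ) :
    Matrix (Fin N → Fin 2) (Fin N → Fin 2) ℂ :=
  Matrix.of fun f g =>
    (1 / (4 * Real.pi) : ℂ) *
      ∫ θ in (0 : ℝ)..Real.pi, ∫ φ in (0 : ℝ)..(2 * Real.pi),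
        ((Real.sin θ : ℂ) * ∏ i, blochVec θ φ (f i) * (starRingEnd ℂ) (blochVec θ φ (g i)))

lemma beta_nat (a : ℕ) : ∀ b : ℕ, ∫ x in (0:ℝ)..1, x ^ b * (1 - x) ^ a
    = (a.factorial * b.factorial : ℝ) / (a + b + 1).factorial := by
  induction a with
  | zero =>
    intro b
    simp only [pow_zero, mul_one, integral_pow, Nat.factorial_zero, Nat.zero_add,
      Nat.factorial_succ, one_pow]
    push_cast
    field_simp
    simp
  | succ a ih =>
    intro b
    have key : (b + 1 : ℝ) * ∫ x in (0:ℝ)..1, x ^ b * (1 - x) ^ (a + 1)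
        = (a + 1 : ℝ) * ∫ x in (0:ℝ)..1, x ^ (b + 1) * (1 - x) ^ a := by
      have hder : ∀ x ∈ Set.uIcc (0:ℝ) 1, HasDerivAt (fun x : ℝ => x ^ (b+1) * (1-x) ^ (a+1))
          ((b+1 : ℝ) * x ^ b * (1-x)^(a+1) - (a+1 : ℝ) * (x ^ (b+1) * (1-x)^a)) x := by
        intro x _
        have h1 : HasDerivAt (fun x : ℝ => x ^ (b+1)) ((b+1 : ℝ) * x ^ b) x := by
          simpa using (hasDerivAt_pow (b+1) x)
        have h2 : HasDerivAt (fun x : ℝ => (1-x) ^ (a+1)) (-((a+1 : ℝ) * (1-x) ^ a)) x := by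
          have := ((hasDerivAt_pow (a+1) (1-x)).comp x ((hasDerivAt_id x).const_sub 1))
          convert this using 1
          · rfl
          · rfl
          · rfl
          · simp
        have := h1.mul h2
        convert this using 1
        · rfl
        · rfl
        · rfl
        push_cast
        ring
      have hint := intervalIntegral.integral_eq_sub_of_hasDerivAt hder (by
        apply Continuous.intervalIntegrable; continuity)
      simp at hint
      have hsub : (∫ x in (0:ℝ)..1, ((b+1 : ℝ) * x ^ b * (1-x)^(a+1) - (a+1 : ℝ) * (x ^ (b+1) * (1-x)^a)))
          = (b+1:ℝ) * (∫ x in (0:ℝ)..1, x ^ b * (1-x)^(a+1)) - (a+1:ℝ) * ∫ x in (0:ℝ)..1, x ^ (b+1) * (1-x)^a := by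
        rw [intervalIntegral.integral_sub (by apply Continuous.intervalIntegrable; continuity)
          (by apply Continuous.intervalIntegrable; continuity),
          ← intervalIntegral.integral_const_mul, ← intervalIntegral.integral_const_mul]
        congr 1
        · congr 1; ext x; ring
      rw [hint] at hsub
      linarith [hsub]
    have hb1 : (b + 1 : ℝ) ≠ 0 := by positivity
    have := ih (b+1)
    rw [this] at key
    have : (∫ x in (0:ℝ)..1, x ^ b * (1 - x) ^ (a+1))
        = (a+1 : ℝ) * ((a.factorial * (b+1).factorial : ℝ) / (a + (b+1) + 1).factorial) / (b+1) := by
      field_simp at key ⊢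
      linarith [key]
    rw [this]
    rw [Nat.factorial_succ a, Nat.factorial_succ b]
    have : a + 1 + b + 1 = a + (b+1) + 1 := by omega
    rw [this]
    push_cast
    field_simp

lemma theta_integral (a b : ℕ) :
    ∫ θ in (0:ℝ)..π, Real.sin θ * Real.cos (θ/2) ^ (2*a) * Real.sin (θ/2) ^ (2*b)
      = 2 * ((a.factorial * b.factorial : ℝ) / (a + b + 1).factorial) := by
  have hg : ∀ x ∈ Set.uIcc (0:ℝ) π, HasDerivAt (fun θ : ℝ => Real.sin (θ/2) ^ 2)
      (Real.sin x / 2) x := by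
    intro x _
    have h1 : HasDerivAt (fun θ : ℝ => θ/2) (1/2 : ℝ) x := by
      simpa using (hasDerivAt_id x).div_const 2
    have h2 := (Real.hasDerivAt_sin (x/2)).comp x h1
    have h3 := ((hasDerivAt_pow 2 (Real.sin (x/2))).comp x h2)
    convert h3 using 1
    · rfl
    · rfl
    · rfl
    have hs : Real.sin x = 2 * Real.sin (x/2) * Real.cos (x/2) := by
      have h4 := Real.sin_two_mul (x/2)
      have h5 : 2 * (x/2) = x := by ring
      rw [h5] at h4
      exact h4
    rw [hs]; push_cast; ring
  have hsub := intervalIntegral.integral_comp_smul_deriv (a := (0:ℝ)) (b := π)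
    (f := fun θ : ℝ => Real.sin (θ/2) ^ 2) (f' := fun θ : ℝ => Real.sin θ / 2)
    (g := fun u : ℝ => 2 * (u ^ b * (1 - u) ^ a)) hg
    (by apply Continuous.continuousOn; continuity) (by continuity)
  simp only [smul_eq_mul] at hsub
  have h0 : Real.sin ((0:ℝ)/2) ^ 2 = 0 := by norm_num
  have hπ : Real.sin (π/2) ^ 2 = 1 := by rw [Real.sin_pi_div_two]; norm_num
  rw [h0, hπ] at hsub
  have hL : ∀ θ : ℝ, Real.sin θ / 2 * (2 * ((Real.sin (θ/2) ^ 2) ^ b * (1 - Real.sin (θ/2) ^ 2) ^ a))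
      = Real.sin θ * Real.cos (θ/2) ^ (2*a) * Real.sin (θ/2) ^ (2*b) := by
    intro θ
    rw [← Real.cos_sq' (θ/2)]
    rw [pow_mul, pow_mul]
    ring
  calc ∫ θ in (0:ℝ)..π, Real.sin θ * Real.cos (θ/2) ^ (2*a) * Real.sin (θ/2) ^ (2*b)
      = ∫ θ in (0:ℝ)..π, Real.sin θ / 2 * (2 * ((Real.sin (θ/2) ^ 2) ^ b * (1 - Real.sin (θ/2) ^ 2) ^ a)) := by
        apply intervalIntegral.integral_congr; intro θ _; exact (hL θ).symm
    _ = ∫ u in (0:ℝ)..1, 2 * (u ^ b * (1 - u) ^ a) := hsub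
    _ = 2 * ∫ u in (0:ℝ)..1, u ^ b * (1 - u) ^ a := by
        rw [intervalIntegral.integral_const_mul]
    _ = 2 * ((a.factorial * b.factorial : ℝ) / (a + b + 1).factorial) := by rw [beta_nat a b]

def wt {N : ℕ} (f : Fin N → Fin 2) : ℕ := ∑ i, (f i).val

lemma wt_le {N : ℕ} (f : Fin N → Fin 2) : wt f ≤ N := by
  calc wt f ≤ ∑ _i : Fin N, 1 := Finset.sum_le_sum (fun i _ => Nat.lt_succ_iff.mp (f i).isLt)
    _ = N := by simp

lemma blochVec_eq (θ φ : ℝ) (j : Fin 2) :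
    blochVec θ φ j = (Real.cos (θ/2) : ℂ) ^ (1 - j.val)
      * (Complex.exp (Complex.I * (φ : ℂ)) * (Real.sin (θ/2) : ℂ)) ^ j.val := by
  fin_cases j <;> simp [blochVec]

lemma conj_blochVec_eq (θ φ : ℝ) (j : Fin 2) :
    (starRingEnd ℂ) (blochVec θ φ j) = (Real.cos (θ/2) : ℂ) ^ (1 - j.val)
      * (Complex.exp (-(Complex.I * (φ : ℂ))) * (Real.sin (θ/2) : ℂ)) ^ j.val := by
  rw [blochVec_eq]
  simp only [_root_.map_mul, map_pow, Complex.conj_ofReal, ← Complex.exp_conj,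
    Complex.conj_I, neg_mul]

lemma sum_one_sub {N : ℕ} (f : Fin N → Fin 2) : ∑ i, (1 - (f i).val) = N - wt f := by
  have h2 : (∑ i, (1 - (f i).val)) + wt f = N := by
    rw [wt, ← Finset.sum_add_distrib]
    have : ∀ i : Fin N, 1 - (f i).val + (f i).val = 1 := fun i => by
      have := Nat.lt_succ_iff.mp (f i).isLt; omega
    simp [this]
  have := wt_le f
  omega

lemma prod_blochVec {N : ℕ} (θ φ : ℝ) (f : Fin N → Fin 2) :
    ∏ i, blochVec θ φ (f i) = (Real.cos (θ/2) : ℂ) ^ (N - wt f)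
      * ((Real.sin (θ/2) : ℂ) ^ (wt f) * Complex.exp ((wt f : ℕ) * (Complex.I * (φ : ℂ)))) := by
  simp only [blochVec_eq]
  rw [Finset.prod_mul_distrib, Finset.prod_pow_eq_pow_sum, Finset.prod_pow_eq_pow_sum,
    sum_one_sub, mul_pow, Complex.exp_nat_mul]
  rw [wt]
  ring

lemma conj_prod_blochVec {N : ℕ} (θ φ : ℝ) (g : Fin N → Fin 2) :
    ∏ i, (starRingEnd ℂ) (blochVec θ φ (g i)) = (Real.cos (θ/2) : ℂ) ^ (N - wt g)
      * ((Real.sin (θ/2) : ℂ) ^ (wt g) * Complex.exp ((wt g : ℕ) * (-(Complex.I * (φ : ℂ))))) := by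
  simp only [conj_blochVec_eq]
  rw [Finset.prod_mul_distrib, Finset.prod_pow_eq_pow_sum, Finset.prod_pow_eq_pow_sum,
    sum_one_sub, mul_pow, Complex.exp_nat_mul]
  rw [wt]
  ring

lemma body_eq {N : ℕ} (θ φ : ℝ) (f g : Fin N → Fin 2) :
    ((Real.sin θ : ℂ) * ∏ i, blochVec θ φ (f i) * (starRingEnd ℂ) (blochVec θ φ (g i)))
    = ((Real.sin θ * Real.cos (θ/2) ^ ((N - wt f) + (N - wt g)) * Real.sin (θ/2) ^ (wt f + wt g) : ℝ) : ℂ)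
      * Complex.exp (Complex.I * ((wt f : ℤ) - (wt g : ℤ)) * (φ : ℂ)) := by
  rw [Finset.prod_mul_distrib, prod_blochVec, conj_prod_blochVec]
  have harg : Complex.exp ((wt f : ℕ) * (Complex.I * (φ:ℂ)))
      * Complex.exp ((wt g : ℕ) * (-(Complex.I * (φ:ℂ))))
      = Complex.exp (Complex.I * ((wt f : ℤ) - (wt g : ℤ)) * (φ:ℂ)) := by
    rw [← Complex.exp_add]; congr 1; push_cast; ring
  push_cast [-Complex.ofReal_cos, -Complex.ofReal_sin] at harg ⊢
  linear_combination ((Real.sin θ : ℂ) * (Real.cos (θ/2) : ℂ) ^ ((N - wt f) + (N - wt g))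
    * (Real.sin (θ/2) : ℂ) ^ (wt f + wt g)) * harg

noncomputable def Emat (N : ℕ) : Matrix (Fin N → Fin 2) (Fin N → Fin 2) ℂ :=
  Matrix.of fun f g =>
    if wt f = wt g then
      ((((wt f).factorial * (N - wt f).factorial : ℝ) / (N + 1).factorial : ℝ) : ℂ)
    else 0

lemma wt_eq_card {N : ℕ} (f : Fin N → Fin 2) :
    wt f = (Finset.univ.filter fun i => f i = 1).card := by
  rw [wt, Finset.card_filter]
  apply Finset.sum_congr rfl
  intro i _
  have h2 : (f i : ℕ) < 2 := (f i).isLt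
  have : (f i : ℕ) = 0 ∨ (f i : ℕ) = 1 := by omega
  rcases this with h | h
  · rw [if_neg, h]
    intro hc; rw [hc] at h; simp at h
  · rw [if_pos, h]
    exact Fin.ext h

lemma card_wt (N k : ℕ) :
    (Finset.univ.filter fun f : Fin N → Fin 2 => wt f = k).card = N.choose k := by
  have hpc : (Finset.powersetCard k (Finset.univ : Finset (Fin N))).card = N.choose k := by
    rw [Finset.card_powersetCard, Finset.card_univ, Fintype.card_fin]
  rw [← hpc]
  apply Finset.card_bij (fun f _ => Finset.univ.filter fun i => f i = 1)
  · intro f hf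
    rw [Finset.mem_powersetCard]
    refine ⟨Finset.filter_subset _ _, ?_⟩
    rw [← wt_eq_card]
    exact (Finset.mem_filter.mp hf).2
  · intro f hf f' hf' hEq
    funext i
    have hi : i ∈ Finset.univ.filter (fun i => f i = 1) ↔ i ∈ Finset.univ.filter (fun i => f' i = 1) := by
      rw [hEq]
    simp only [Finset.mem_filter, Finset.mem_univ, true_and] at hi
    have h1 : (f i : ℕ) < 2 := (f i).isLt
    have h2 : (f' i : ℕ) < 2 := (f' i).isLt
    by_cases hfi : f i = 1
    · rw [hfi, (hi.mp hfi).symm]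
    · have hfi' : ¬ f' i = 1 := fun hc => hfi (hi.mpr hc)
      have e1 : (f i : ℕ) = 0 := by
        rcases (by omega : (f i : ℕ) = 0 ∨ (f i : ℕ) = 1) with h | h
        · exact h
        · exact absurd (Fin.ext h) hfi
      have e2 : (f' i : ℕ) = 0 := by
        rcases (by omega : (f' i : ℕ) = 0 ∨ (f' i : ℕ) = 1) with h | h
        · exact h
        · exact absurd (Fin.ext h) hfi'
      exact Fin.ext (e1.trans e2.symm)
  · intro s hs
    rw [Finset.mem_powersetCard] at hs
    refine ⟨fun i => if i ∈ s then 1 else 0, ?_, ?_⟩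
    · rw [Finset.mem_filter]
      refine ⟨Finset.mem_univ _, ?_⟩
      rw [wt_eq_card, ← hs.2]
      congr 1
      ext i
      simp only [Finset.mem_filter, Finset.mem_univ, true_and]
      by_cases hi : i ∈ s <;> simp [hi]
    · ext i
      simp only [Finset.mem_filter, Finset.mem_univ, true_and]
      by_cases hi : i ∈ s <;> simp [hi]

lemma sum_wt_classes {N : ℕ} (h : ℕ → ℂ) :
    ∑ f : Fin N → Fin 2, h (wt f) = ∑ k ∈ Finset.range (N+1), (N.choose k : ℂ) * h k := by
  rw [← Finset.sum_fiberwise_of_maps_to (g := fun f : Fin N → Fin 2 => wt f)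
    (fun f _ => Finset.mem_range.mpr (Nat.lt_succ_of_le (wt_le f))) (fun f => h (wt f))]
  apply Finset.sum_congr rfl
  intro k _
  rw [Finset.sum_congr rfl (fun f hf => by
    rw [(Finset.mem_filter.mp hf).2]), Finset.sum_const, card_wt]
  simp [nsmul_eq_mul]

lemma choose_factorial_real {N k : ℕ} (hk : k ≤ N) :
    (N.choose k : ℝ) * (k.factorial * (N - k).factorial / (N + 1).factorial)
      = (N + 1 : ℝ)⁻¹ := by
  have key : N.choose k * (k.factorial * (N - k).factorial) = N.factorial := by
    rw [← Nat.choose_mul_factorial_mul_factorial hk]; ring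
  have h1 : ((N+1).factorial : ℝ) = (N+1) * N.factorial := by
    rw [Nat.factorial_succ]; push_cast; ring
  rw [h1]
  have hNf : (N.factorial : ℝ) ≠ 0 := Nat.cast_ne_zero.mpr (Nat.factorial_ne_zero _)
  have hN1 : (N + 1 : ℝ) ≠ 0 := by positivity
  field_simp
  rw [← key]
  push_cast
  ring

lemma trace_Emat (N : ℕ) : (Emat N).trace = 1 := by
  rw [Matrix.trace]
  have hdiag : ∀ f : Fin N → Fin 2, (Emat N).diag f
      = (((wt f).factorial * (N - wt f).factorial / (N + 1).factorial : ℝ) : ℂ) := by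
    intro f
    rw [Matrix.diag, Emat, Matrix.of_apply, if_pos rfl]
  rw [Finset.sum_congr rfl (fun f _ => hdiag f)]
  rw [sum_wt_classes (fun k => ((k.factorial * (N - k).factorial / (N + 1).factorial : ℝ) : ℂ))]
  have : ∀ k ∈ Finset.range (N+1), (N.choose k : ℂ) * ((k.factorial * (N - k).factorial / (N + 1).factorial : ℝ) : ℂ)
      = (((N:ℝ) + 1)⁻¹ : ℝ) := by
    intro k hk
    have hk' : k ≤ N := Nat.lt_succ_iff.mp (Finset.mem_range.mp hk)
    rw [show (N.choose k : ℂ) = ((N.choose k : ℝ) : ℂ) by push_cast; rfl]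
    rw [← Complex.ofReal_mul, choose_factorial_real hk']
  rw [Finset.sum_congr rfl this, Finset.sum_const, Finset.card_range]
  rw [nsmul_eq_mul]
  have hN1c : ((N:ℂ) + 1) ≠ 0 := Nat.cast_add_one_ne_zero N
  push_cast
  field_simp

lemma sq_Emat (N : ℕ) : Emat N * Emat N = (((N : ℂ) + 1)⁻¹) • Emat N := by
  ext f g
  rw [Matrix.mul_apply, Matrix.smul_apply]
  by_cases h : wt f = wt g
  · have hterm : ∀ h' : Fin N → Fin 2, Emat N f h' * Emat N h' g
        = if wt h' = wt f then ((((wt f).factorial * (N - wt f).factorial / (N + 1).factorial : ℝ))^2 : ℂ) else 0 := by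
      intro h'
      rw [Emat, Matrix.of_apply, Matrix.of_apply]
      by_cases hh : wt h' = wt f
      · rw [if_pos hh.symm, if_pos (hh.trans h), if_pos hh, hh]
        push_cast
        ring
      · rw [if_neg (fun hc => hh hc.symm), zero_mul, if_neg hh]
    rw [Finset.sum_congr rfl (fun h' _ => hterm h'), ← Finset.sum_filter, Finset.sum_const,
      card_wt, Emat, Matrix.of_apply, if_pos h, nsmul_eq_mul, smul_eq_mul]
    have hr := choose_factorial_real (wt_le f)
    have hr2 : (N.choose (wt f) : ℝ) * ((wt f).factorial * (N - wt f).factorial / (N + 1).factorial)^2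
        = ((N:ℝ)+1)⁻¹ * ((wt f).factorial * (N - wt f).factorial / (N + 1).factorial) := by
      rw [pow_two, ← mul_assoc, hr]
    have := congrArg (fun x : ℝ => (x : ℂ)) hr2
    push_cast at this ⊢
    convert this using 2 <;> push_cast <;> ring
  · have hterm : ∀ h' : Fin N → Fin 2, Emat N f h' * Emat N h' g = 0 := by
      intro h'
      rw [Emat, Matrix.of_apply, Matrix.of_apply]
      by_cases hh : wt f = wt h'
      · rw [if_neg (fun hc => h (hh.trans hc)), mul_zero]
      · rw [if_neg hh, zero_mul]
    rw [Finset.sum_congr rfl (fun h' _ => hterm h'), Finset.sum_const_zero, Emat,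
      Matrix.of_apply, if_neg h, smul_zero]

lemma avg_eq_Emat (N : ℕ) : avgPureState N = Emat N := by
  ext f g
  rw [avgPureState, Emat, Matrix.of_apply, Matrix.of_apply]
  simp only [body_eq]
  by_cases h : wt f = wt g
  · -- constant phase
    rw [if_pos h]
    simp only [h, sub_self, mul_zero, zero_mul, Complex.exp_zero, mul_one]
    have hinner : ∀ θ : ℝ, (∫ _φ in (0:ℝ)..(2*π),
        ((Real.sin θ * Real.cos (θ/2) ^ ((N - wt g) + (N - wt g)) * Real.sin (θ/2) ^ (wt g + wt g) : ℝ) : ℂ))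
        = ((2*π : ℝ) : ℂ) * ((Real.sin θ * Real.cos (θ/2) ^ ((N - wt g) + (N - wt g)) * Real.sin (θ/2) ^ (wt g + wt g) : ℝ) : ℂ) := by
      intro θ
      rw [intervalIntegral.integral_const, sub_zero, Complex.real_smul]
    rw [intervalIntegral.integral_congr (fun θ _ => hinner θ)]
    rw [intervalIntegral.integral_const_mul, intervalIntegral.integral_ofReal]
    have hexp : (N - wt g) + (N - wt g) = 2 * (N - wt g) := by omega
    have hexp2 : wt g + wt g = 2 * wt g := by omega
    rw [hexp, hexp2, theta_integral (N - wt g) (wt g)]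
    have hNf : N - wt g + wt g + 1 = N + 1 := by have := wt_le g; omega
    rw [hNf]
    have hπ : (π : ℝ) ≠ 0 := Real.pi_ne_zero
    have hπc : ((π : ℝ) : ℂ) ≠ 0 := by exact_mod_cast hπ
    push_cast
    have hC : (((N+1).factorial : ℕ) : ℂ) ≠ 0 := Nat.cast_ne_zero.mpr (Nat.factorial_ne_zero _)
    field_simp [hπc, hC]
    ring
  · -- oscillating phase integrates to zero
    have hm : ((wt f : ℤ) - (wt g : ℤ)) ≠ 0 := by
      intro hc; apply h; omega
    rw [if_neg h]
    have hc : (Complex.I * ((wt f : ℤ) - (wt g : ℤ)) : ℂ) ≠ 0 := by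
      apply mul_ne_zero Complex.I_ne_zero
      intro h0
      exact hm (by exact_mod_cast h0)
    have hinner : ∀ θ : ℝ, (∫ φ in (0:ℝ)..(2*π),
        ((Real.sin θ * Real.cos (θ/2) ^ ((N - wt f) + (N - wt g)) * Real.sin (θ/2) ^ (wt f + wt g) : ℝ) : ℂ)
          * Complex.exp (Complex.I * ((wt f : ℤ) - (wt g : ℤ)) * (φ:ℂ))) = 0 := by
      intro θ
      rw [intervalIntegral.integral_const_mul]
      have : (∫ φ in (0:ℝ)..(2*π), Complex.exp (Complex.I * ((wt f : ℤ) - (wt g : ℤ)) * (φ:ℂ))) = 0 := by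
        rw [integral_exp_mul_complex hc]
        have h1 : Complex.I * ((wt f : ℤ) - (wt g : ℤ)) * ((2*π : ℝ) : ℂ)
            = (((wt f : ℤ) - (wt g : ℤ)) : ℤ) * (2 * π * Complex.I) := by push_cast; ring
        rw [h1, Complex.exp_int_mul_two_pi_mul_I]
        simp
      rw [this, mul_zero]
    rw [intervalIntegral.integral_congr (fun θ _ => hinner θ)]
    simp

/-- **Holevo χ of the uniform pure-state ensemble.**  For the ensemble
`{(|n⟩⟨n|)^{⊗N}, d²n}` of identically prepared pure qubits (Haar measure on the Bloch
sphere), the Holevo quantity `χ = H(ρ̄) - ∫ d²n H((|n⟩⟨n|)^{⊗N}) = H(ρ̄)` (pure states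
have zero entropy) equals `log (N+1)`: the von Neumann entropy of the average state,
computed from its eigenvalues, is `log (N+1)`. -/
theorem chi_uniform_pure_ensemble (N : ℕ)
    (hherm : (avgPureState N).IsHermitian) :
    (-∑ i, hherm.eigenvalues i * Real.log (hherm.eigenvalues i)) - 0 = Real.log (N + 1) := by
  have hE := avg_eq_Emat N
  -- each eigenvalue satisfies λ² = (N+1)⁻¹ λ
  have hquad : ∀ i, (hherm.eigenvalues i)^2 = ((N:ℝ)+1)⁻¹ * hherm.eigenvalues i := by
    intro i
    have hv := hherm.mulVec_eigenvectorBasis i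
    have hsq : avgPureState N * avgPureState N = (((N:ℂ)+1)⁻¹) • avgPureState N := by
      conv_lhs => rw [hE]
      conv_rhs => rw [hE]
      exact sq_Emat N
    have hv2 : avgPureState N *ᵥ (avgPureState N *ᵥ ⇑(hherm.eigenvectorBasis i))
        = ((hherm.eigenvalues i : ℂ)^2) • ⇑(hherm.eigenvectorBasis i) := by
      rw [hv, Matrix.mulVec_smul, hv, smul_smul, RCLike.real_smul_eq_coe_smul (K := ℂ)]
      congr 1
      push_cast
      exact (sq (((hherm.eigenvalues i : ℝ)) : ℂ)).symm
    have hv3 : avgPureState N *ᵥ (avgPureState N *ᵥ ⇑(hherm.eigenvectorBasis i))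
        = (((N:ℂ)+1)⁻¹ * (hherm.eigenvalues i : ℂ)) • ⇑(hherm.eigenvectorBasis i) := by
      rw [Matrix.mulVec_mulVec, hsq, Matrix.smul_mulVec, hv,
        RCLike.real_smul_eq_coe_smul (K := ℂ), smul_smul]
      rfl
    have hvne : ⇑(hherm.eigenvectorBasis i) ≠ 0 := by
      intro h; apply hherm.eigenvectorBasis.orthonormal.ne_zero i; ext j; simpa using congrFun h j
    have hc : ((hherm.eigenvalues i : ℂ)^2) = (((N:ℂ)+1)⁻¹ * (hherm.eigenvalues i : ℂ)) := by
      have heq := hv2.symm.trans hv3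
      by_contra hne
      exact hvne (by
        have hsub := sub_eq_zero.mpr heq
        rw [← sub_smul] at hsub
        exact (smul_eq_zero.mp hsub).resolve_left (sub_ne_zero.mpr hne))
    have hcast : (((hherm.eigenvalues i)^2 : ℝ) : ℂ) = ((((N:ℝ)+1)⁻¹ * hherm.eigenvalues i : ℝ) : ℂ) := by
      push_cast
      convert hc using 2
    exact_mod_cast hcast
  -- sum of eigenvalues = 1
  have htr : ∑ i, hherm.eigenvalues i = 1 := by
    have hU := Matrix.mem_unitaryGroup_iff'.mp (hherm.eigenvectorUnitary).2
    have h1 : (avgPureState N).trace = ∑ i, (hherm.eigenvalues i : ℂ) := by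
      conv_lhs => rw [hherm.spectral_theorem]
      rw [Unitary.conjStarAlgAut_apply, Matrix.trace_mul_cycle, hU, one_mul, Matrix.trace_diagonal]
      simp [Function.comp]
    have h2 : (1:ℂ) = ∑ i, (hherm.eigenvalues i : ℂ) := by
      rw [← trace_Emat N, ← hE]
      exact h1
    exact_mod_cast h2.symm
  -- conclude
  have hlog : ∀ i, hherm.eigenvalues i * Real.log (hherm.eigenvalues i)
      = hherm.eigenvalues i * Real.log (((N:ℝ)+1)⁻¹) := by
    intro i
    rcases eq_or_ne (hherm.eigenvalues i) 0 with h0 | h0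
    · rw [h0]; ring
    · have : hherm.eigenvalues i = ((N:ℝ)+1)⁻¹ := by
        have := hquad i
        have hx : hherm.eigenvalues i * (hherm.eigenvalues i - ((N:ℝ)+1)⁻¹) = 0 := by
          nlinarith [hquad i]
        rcases mul_eq_zero.mp hx with h | h
        · exact absurd h h0
        · linarith [sub_eq_zero.mp h]
      rw [this]
  rw [Finset.sum_congr rfl (fun i _ => hlog i), ← Finset.sum_mul, htr, one_mul]
  have hN1 : (0:ℝ) < (N:ℝ) + 1 := by positivity
  rw [Real.log_inv]
  push_cast
  ring
end

section
/- For a Young diagram λ = (λ_1 ≥ ... ≥ λ_d ≥ 0) with ∑λ_i = N and at most r nonzero rows (λ_i = 0 for i > r), the dimension of the corresponding irreducible GL(d) representation, d_λ = ∏_{1≤i<j≤d} (λ_i − λ_j − i + j) / ∏_{k=1}^{d−1} k!, satisfies d_λ ≤ (N+d−1)^{(2dr−r²−r)/2}. -/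
open scoped Classical
open Finset

private lemma prod_pairs_aux {d : ℕ} (f : Fin d × Fin d → ℝ) :
    (∏ p ∈ Finset.univ.filter (fun p : Fin d × Fin d => p.1 < p.2), f p)
      = ∏ j : Fin d, ∏ i : Fin d, if i < j then f (i, j) else 1 := by
  rw [Finset.prod_filter, ← Finset.univ_product_univ, Finset.prod_product]
  exact Finset.prod_comm

private lemma nat_prod_sub (n : ℕ) : ∏ i ∈ range n, (n - i) = n.factorial := by
  rw [← Finset.prod_range_reflect]
  rw [← Finset.prod_range_add_one_eq_factorial]
  apply Finset.prod_congr rfl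
  intro i hi
  simp only [Finset.mem_range] at hi
  omega

private lemma real_prod_sub (n : ℕ) : ∏ i ∈ range n, ((n : ℝ) - i) = n.factorial := by
  have := congrArg (Nat.cast : ℕ → ℝ) (nat_prod_sub n)
  rw [Nat.cast_prod] at this
  rw [← this]
  apply Finset.prod_congr rfl
  intro i hi
  simp only [Finset.mem_range] at hi
  rw [Nat.cast_sub hi.le]

private lemma denom_eq {d : ℕ} :
    (∏ p ∈ Finset.univ.filter (fun p : Fin d × Fin d => p.1 < p.2),
        ((p.2 : ℝ) - (p.1 : ℝ)))
      = ∏ k ∈ range d, (Nat.factorial k : ℝ) := by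
  rw [prod_pairs_aux (fun p => ((p.2 : ℝ) - (p.1 : ℝ)))]
  rw [← Fin.prod_univ_eq_prod_range (fun k => (Nat.factorial k : ℝ))]
  apply Finset.prod_congr rfl
  intro j _
  have h1 : (∏ i : Fin d, if i < j then ((j : ℝ) - (i : ℝ)) else 1)
      = ∏ i ∈ range d, if i < (j : ℕ) then ((j : ℝ) - (i : ℝ)) else 1 := by
    rw [← Fin.prod_univ_eq_prod_range (fun i => if i < (j : ℕ) then ((j : ℝ) - (i : ℝ)) else 1)]
    apply Finset.prod_congr rfl
    intro i _
    exact if_congr Fin.lt_def rfl rfl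
  rw [h1, ← Finset.prod_filter]
  have h2 : (range d).filter (fun i => i < (j : ℕ)) = range (j : ℕ) := by
    ext x; simp only [Finset.mem_filter, Finset.mem_range]
    exact ⟨fun h => h.2, fun h => ⟨h.trans j.isLt, h⟩⟩
  rw [h2, real_prod_sub]

private lemma sum_double (d r : ℕ) (hrd : r ≤ d) :
    2 * (∑ i ∈ range r, (d - 1 - i)) + r ^ 2 + r = 2 * d * r := by
  induction r with
  | zero => simp
  | succ n ih =>
    have h1 := ih (by omega)
    rw [Finset.sum_range_succ]
    have e : 2 * d * (n + 1) = 2 * d * n + 2 * d := by ring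
    have e2 : (n + 1) ^ 2 = n ^ 2 + 2 * n + 1 := by ring
    omega

private lemma card_eq {d r : ℕ} (hrd : r ≤ d) :
    ((Finset.univ.filter (fun p : Fin d × Fin d => p.1 < p.2)).filter
        (fun p => (p.1 : ℕ) < r)).card = (2 * d * r - r ^ 2 - r) / 2 := by
  have key : ((Finset.univ.filter (fun p : Fin d × Fin d => p.1 < p.2)).filter
      (fun p => (p.1 : ℕ) < r)).card = ∑ i ∈ range r, (d - 1 - i) := by
    rw [Finset.filter_filter, Finset.card_filter, Fintype.sum_prod_type]
    have h1 : ∀ i : Fin d, (∑ j : Fin d, if i < j ∧ (i : ℕ) < r then 1 else 0)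
        = if (i : ℕ) < r then d - 1 - (i : ℕ) else 0 := by
      intro i
      by_cases hc : (i : ℕ) < r
      · simp only [hc, and_true, if_true]
        have : (∑ j : Fin d, if i < j then (1 : ℕ) else 0)
            = ∑ j ∈ range d, if (i : ℕ) < j then 1 else 0 := by
          rw [← Fin.sum_univ_eq_sum_range (fun j => if (i : ℕ) < j then (1:ℕ) else 0)]
          apply Finset.sum_congr rfl; intro j _; exact if_congr Fin.lt_def rfl rfl
        rw [this, Finset.sum_boole]
        have h2 : (range d).filter (fun j => (i : ℕ) < j) = Finset.Ico ((i : ℕ) + 1) d := by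
          ext x; simp only [Finset.mem_filter, Finset.mem_range, Finset.mem_Ico]; omega
        rw [h2]
        simp [Nat.card_Ico]
        omega
      · simp [hc]
    rw [Finset.sum_congr rfl (fun i _ => h1 i)]
    rw [Fin.sum_univ_eq_sum_range (fun i => if i < r then d - 1 - i else 0)]
    rw [← Finset.sum_filter]
    congr 1
    ext x; simp only [Finset.mem_filter, Finset.mem_range]
    omega
  rw [key]
  have := sum_double d r hrd
  omega

/-- The Weyl dimension formula for the irreducible `GL(d)` representation labeled by a
Young diagram `λ = (λ_1 ≥ … ≥ λ_d ≥ 0)` (0-indexed here):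
`d_λ = ∏_{i<j} (λ_i - λ_j - i + j) / ∏_{k=1}^{d-1} k!`. -/
noncomputable def weylDim (d : ℕ) (lam : Fin d → ℕ) : ℝ :=
  (∏ p ∈ Finset.univ.filter (fun p : Fin d × Fin d => p.1 < p.2),
      ((lam p.1 : ℝ) - (lam p.2 : ℝ) - (p.1 : ℝ) + (p.2 : ℝ))) /
    ∏ k ∈ Finset.range d, (Nat.factorial k : ℝ)

/-- For a Young diagram with `N` boxes and at most `r ≤ d` nonzero rows, the Weyl
dimension satisfies `d_λ ≤ (N+d-1)^((2dr - r² - r)/2)`. -/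
theorem weylDim_upper_bound (d r N : ℕ) (hr : 1 ≤ r) (hrd : r ≤ d)
    (lam : Fin d → ℕ) (hmono : ∀ i j : Fin d, i ≤ j → lam j ≤ lam i)
    (hsum : ∑ i, lam i = N) (hrows : ∀ i : Fin d, r ≤ (i : ℕ) → lam i = 0) :
    weylDim d lam ≤ ((N : ℝ) + d - 1) ^ ((2 * d * r - r ^ 2 - r) / 2) := by
  have hDpos : (0:ℝ) < ∏ k ∈ range d, (Nat.factorial k : ℝ) :=
    Finset.prod_pos (fun k _ => by positivity)
  rw [weylDim, div_le_iff₀ hDpos]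
  have hlamN : ∀ i : Fin d, (lam i : ℝ) ≤ N := by
    intro i
    have h := Finset.single_le_sum (f := lam) (fun j _ => Nat.zero_le _) (Finset.mem_univ i)
    rw [hsum] at h
    exact_mod_cast h
  set B : ℝ := (N : ℝ) + d - 1 with hB
  have key : (∏ p ∈ Finset.univ.filter (fun p : Fin d × Fin d => p.1 < p.2),
        ((lam p.1 : ℝ) - (lam p.2 : ℝ) - (p.1 : ℝ) + (p.2 : ℝ)))
      ≤ ∏ p ∈ Finset.univ.filter (fun p : Fin d × Fin d => p.1 < p.2),
        ((if (p.1 : ℕ) < r then B else 1) * ((p.2 : ℝ) - (p.1 : ℝ))) := by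
    apply Finset.prod_le_prod
    · intro p hp
      have hij : p.1 < p.2 := (Finset.mem_filter.mp hp).2
      have h1 : (lam p.2 : ℝ) ≤ lam p.1 := by exact_mod_cast hmono _ _ hij.le
      have h2 : ((p.1 : ℕ) : ℝ) < ((p.2 : ℕ) : ℝ) := by exact_mod_cast Fin.lt_def.mp hij
      linarith
    · intro p hp
      have hij : p.1 < p.2 := (Finset.mem_filter.mp hp).2
      have hij' : (p.1 : ℕ) < (p.2 : ℕ) := hij
      by_cases hc : (p.1 : ℕ) < r
      · rw [if_pos hc]
        have h1 : (lam p.1 : ℝ) ≤ N := hlamN p.1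
        have h2 : (0:ℝ) ≤ (lam p.2 : ℝ) := by positivity
        have h3 : ((p.1 : ℕ) : ℝ) + 1 ≤ ((p.2 : ℕ) : ℝ) := by exact_mod_cast hij'
        have h4 : ((p.2 : ℕ) : ℝ) ≤ (d : ℝ) - 1 := by
          have h5 : (p.2 : ℕ) + 1 ≤ d := p.2.isLt
          have h6 : (((p.2 : ℕ) : ℝ)) + 1 ≤ (d : ℝ) := by exact_mod_cast h5
          linarith
        have h5 : (0:ℝ) ≤ ((p.1 : ℕ) : ℝ) := by positivity
        have h0 : (0:ℝ) ≤ (N : ℝ) := Nat.cast_nonneg N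
        rw [hB]
        nlinarith [mul_nonneg h0 (by linarith : (0:ℝ) ≤ ((p.2:ℕ):ℝ) - ((p.1:ℕ):ℝ) - 1),
          mul_nonneg (by linarith : (0:ℝ) ≤ ((p.2:ℕ):ℝ) - ((p.1:ℕ):ℝ) - 1)
            (by linarith : (0:ℝ) ≤ (d:ℝ) - 2)]
      · rw [if_neg hc, one_mul]
        have hc' : r ≤ (p.1 : ℕ) := le_of_not_gt hc
        rw [hrows p.1 hc', hrows p.2 (le_trans hc' hij'.le)]
        norm_num
  calc (∏ p ∈ Finset.univ.filter (fun p : Fin d × Fin d => p.1 < p.2),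
        ((lam p.1 : ℝ) - (lam p.2 : ℝ) - (p.1 : ℝ) + (p.2 : ℝ)))
      ≤ ∏ p ∈ Finset.univ.filter (fun p : Fin d × Fin d => p.1 < p.2),
        ((if (p.1 : ℕ) < r then B else 1) * ((p.2 : ℝ) - (p.1 : ℝ))) := key
    _ = (∏ p ∈ Finset.univ.filter (fun p : Fin d × Fin d => p.1 < p.2),
          (if (p.1 : ℕ) < r then B else 1))
        * ∏ p ∈ Finset.univ.filter (fun p : Fin d × Fin d => p.1 < p.2),
          ((p.2 : ℝ) - (p.1 : ℝ)) := Finset.prod_mul_distrib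
    _ = B ^ ((2 * d * r - r ^ 2 - r) / 2)
        * ∏ k ∈ range d, (Nat.factorial k : ℝ) := by
        rw [Finset.prod_ite (fun _ => B) (fun _ => (1:ℝ)), Finset.prod_const,
          Finset.prod_const_one, mul_one, card_eq hrd, denom_eq]
end

section
/- There exists a constant c(r,d) > 0 such that for all N divisible by r(r+1)/2, the total dimension of GL(d) irreducible representations over Young diagrams with N boxes and at most r rows satisfies ∑_{λ ∈ Y_{N,r}} d_λ ≥ c(r,d) · N^{(2dr−r²+r−2)/2}. -/
open scoped Classical

/-- The set of Young diagrams with `N` boxes and at most `r` rows, encoded as weakly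
decreasing tuples of `r` entries in `{0, …, N}` summing to `N`. -/
noncomputable def youngDiagrams (N r : ℕ) : Finset (Fin r → Fin (N + 1)) :=
  Finset.univ.filter (fun lam =>
    (∀ i j : Fin r, i ≤ j → (lam j : ℕ) ≤ (lam i : ℕ)) ∧ ∑ i, (lam i : ℕ) = N)

/-- Extension of an `r`-row diagram to `d ≥ r` rows by appending zero rows. -/
def padDiagram (d r N : ℕ) (lam : Fin r → Fin (N + 1)) : Fin d → ℕ :=
  fun i => if h : (i : ℕ) < r then (lam ⟨i, h⟩ : ℕ) else 0

/- ### Auxiliary lemmas -/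

lemma prod_ite_lt_eval (d r : ℕ) (hrd : r ≤ d) (x : ℝ) :
    ∏ p ∈ Finset.univ.filter (fun p : Fin d × Fin d => p.1 < p.2),
      (if (p.1 : ℕ) < r then x else 1)
      = x ^ ∑ i ∈ Finset.range r, (d - 1 - i) := by
  rw [Finset.prod_filter, ← Finset.univ_product_univ, Finset.prod_product]
  have h1 : ∀ i : Fin d, (∏ j : Fin d, if i < j then (if (i : ℕ) < r then x else 1) else 1)
      = (if (i : ℕ) < r then x else 1) ^ (d - 1 - (i : ℕ)) := by
    intro i
    rw [Finset.prod_ite, Finset.prod_const, Finset.prod_const, one_pow, mul_one]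
    congr 1
    have : (Finset.univ.filter fun j : Fin d => i < j) = Finset.Ioi i := by
      ext j; simp
    rw [this, Fin.card_Ioi]
  simp_rw [h1]
  have h2 : ∀ i : Fin d, (if (i : ℕ) < r then x else 1) ^ (d - 1 - (i : ℕ))
      = (if (i : ℕ) < r then x ^ (d - 1 - (i : ℕ)) else 1) := by
    intro i; split <;> simp
  simp_rw [h2]
  rw [← Finset.prod_filter, Finset.prod_pow_eq_pow_sum]
  congr 1
  rw [Finset.sum_filter, Fin.sum_univ_eq_sum_range (fun i => if i < r then d - 1 - i else 0) d]
  rw [← Finset.sum_subset (Finset.range_subset_range.mpr hrd)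
    (fun x _ hx => by rw [if_neg (by simpa using hx)])]
  exact Finset.sum_congr rfl fun i hi => if_pos (Finset.mem_range.mp hi)

lemma gauss_step (m : ℕ) : (∑ j ∈ Finset.range m, (m+1-j)) + 1 = (m+1)*((m+1)+1)/2 := by
  have hrefl : ∑ j ∈ Finset.range m, (m+1-j) = ∑ j ∈ Finset.range m, (j+2) := by
    rw [← Finset.sum_range_reflect (fun j => j + 2) m]
    exact Finset.sum_congr rfl fun j hj => by
      have := Finset.mem_range.mp hj; omega
  rw [hrefl]
  have hsplit : ∑ j ∈ Finset.range m, (j+2) = (∑ j ∈ Finset.range m, j) + 2*m := by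
    simp [Finset.sum_add_distrib, Finset.sum_const, Finset.card_range, smul_eq_mul]; ring
  rw [hsplit]
  have hq : (∑ i ∈ Finset.range (m+1), i) * 2 = (m+1) * m := by
    rw [Finset.sum_range_id_mul_two]; simp
  rw [Finset.sum_range_succ] at hq
  obtain ⟨b, hb⟩ := Nat.even_mul_succ_self (m+1)
  rw [hb]
  set s := ∑ j ∈ Finset.range m, j
  have key : 2*((s + 2*m) + 1) = 2*b := by
    zify at hq hb ⊢
    linear_combination hq + hb
  omega

lemma exp_eq (m u : ℕ) :
    (2*((m+1)+u)*(m+1) - (m+1)^2 + (m+1) - 2)/2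
      = m + ∑ i ∈ Finset.range (m+1), (((m+1)+u) - 1 - i) := by
  have h1 : ∑ i ∈ Finset.range (m+1), (((m+1)+u) - 1 - i)
      = ∑ i ∈ Finset.range (m+1), (u + ((m+1) - 1 - i)) :=
    Finset.sum_congr rfl fun i hi => by
      have := Finset.mem_range.mp hi; omega
  rw [h1, Finset.sum_range_reflect (fun j => u + j) (m+1), Finset.sum_add_distrib,
    Finset.sum_const, Finset.card_range, smul_eq_mul]
  set s := ∑ i ∈ Finset.range (m+1), i with hs
  have hq : s * 2 = (m+1) * m := by
    rw [hs, Finset.sum_range_id_mul_two]; simp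
  have c1 : (m+1)^2 ≤ 2*((m+1)+u)*(m+1) := by nlinarith
  have c1' : (m+1)^2 + (m+1)^2 ≤ 2*((m+1)+u)*(m+1) := by nlinarith
  have c2 : 2 ≤ 2*((m+1)+u)*(m+1) - (m+1)^2 + (m+1) := by
    have h3 : (m+1)^2 ≤ 2*((m+1)+u)*(m+1) - (m+1)^2 := Nat.le_sub_of_add_le c1'
    have h4 : 1 ≤ (m+1)^2 := Nat.one_le_pow _ _ (by omega)
    omega
  have hnum : 2*((m+1)+u)*(m+1) - (m+1)^2 + (m+1) - 2
      = 2*(m + ((m+1)*u + s)) := by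
    zify [c1, c2]
    have hq' : (s : ℤ) * 2 = ((m:ℤ)+1) * m := by exact_mod_cast hq
    linear_combination -hq'
  rw [hnum]
  omega

/-- Core diagram: row `i < m` is `(m+1-i)t + f i`, row `m` is `t - ∑ f`. -/
def coreLam (m t q : ℕ) (f : Fin m → Fin (q+1)) (i : ℕ) : ℕ :=
  if h : i < m then (m+1-i)*t + (f ⟨i,h⟩ : ℕ) else t - ∑ j, (f j : ℕ)

lemma core_fval (m q : ℕ) (f : Fin m → Fin (q+1)) (j : Fin m) : (f j : ℕ) ≤ q :=
  Nat.lt_succ_iff.mp (f j).isLt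

lemma core_sum_le (m t q : ℕ) (f : Fin m → Fin (q+1)) (hqt : 2*(m+1)*q ≤ t) :
    2 * (∑ j, (f j : ℕ)) ≤ t := by
  have h1 : (∑ j, (f j : ℕ)) ≤ m * q := by
    calc (∑ j, (f j : ℕ)) ≤ ∑ _j : Fin m, q :=
          Finset.sum_le_sum fun j _ => core_fval m q f j
    _ = m * q := by simp [Finset.sum_const, mul_comm]
  have h2 : 2 * (m * q) ≤ 2*(m+1)*q := by
    have h : 2 * m ≤ 2 * (m+1) := by omega
    calc 2 * (m*q) = (2*m)*q := by ring
    _ ≤ (2*(m+1))*q := Nat.mul_le_mul_right q h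
  omega

lemma core_q_le (m t q : ℕ) (hqt : 2*(m+1)*q ≤ t) : 2 * q ≤ t := by
  have h : (2*1)*q ≤ (2*(m+1))*q := Nat.mul_le_mul_right q (by omega)
  omega

lemma core_mono (m t q : ℕ) (f : Fin m → Fin (q+1)) (hqt : 2*(m+1)*q ≤ t) :
    ∀ i j : ℕ, i ≤ j → coreLam m t q f j ≤ coreLam m t q f i := by
  intro i j hij
  unfold coreLam
  have hst := core_sum_le m t q f hqt
  have hq2 := core_q_le m t q hqt
  split_ifs with hj hi hi
  · rcases eq_or_lt_of_le hij with rfl | hlt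
    · simp
    · have hfj := core_fval m q f ⟨j, hj⟩
      have h1 : m + 1 - j + 1 ≤ m + 1 - i := by omega
      calc (m+1-j)*t + (f ⟨j,hj⟩ : ℕ) ≤ (m+1-j)*t + t := by omega
      _ = (m+1-j+1)*t := by ring
      _ ≤ (m+1-i)*t := Nat.mul_le_mul_right t h1
      _ ≤ (m+1-i)*t + (f ⟨i,hi⟩ : ℕ) := Nat.le_add_right _ _
  · omega
  · calc t - ∑ j, (f j : ℕ) ≤ t := Nat.sub_le _ _
    _ = 1 * t := (one_mul t).symm
    _ ≤ (m+1-i)*t := Nat.mul_le_mul_right t (by omega)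
    _ ≤ (m+1-i)*t + (f ⟨i,hi⟩ : ℕ) := Nat.le_add_right _ _
  · exact le_refl _

lemma core_total (m t q : ℕ) (f : Fin m → Fin (q+1)) (hst : 2 * (∑ j, (f j : ℕ)) ≤ t) :
    ∑ i ∈ Finset.range (m+1), coreLam m t q f i = ((m+1)*((m+1)+1)/2) * t := by
  rw [Finset.sum_range_succ]
  have hlast : coreLam m t q f m = t - ∑ j, (f j : ℕ) := by
    unfold coreLam; rw [dif_neg (lt_irrefl m)]
  have hin : ∀ i ∈ Finset.range m, coreLam m t q f i
      = (m+1-i)*t + (if h : i < m then (f ⟨i,h⟩ : ℕ) else 0) := by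
    intro i hi
    have hi' := Finset.mem_range.mp hi
    unfold coreLam
    rw [dif_pos hi', dif_pos hi']
  rw [hlast, Finset.sum_congr rfl hin, Finset.sum_add_distrib]
  have hSe : (∑ i ∈ Finset.range m, (if h : i < m then (f ⟨i,h⟩ : ℕ) else 0))
      = ∑ j, (f j : ℕ) := by
    rw [← Fin.sum_univ_eq_sum_range (fun i => if h : i < m then (f ⟨i,h⟩ : ℕ) else 0) m]
    exact Finset.sum_congr rfl fun j _ => by rw [dif_pos j.isLt]
  rw [hSe, ← Finset.sum_mul]
  have hg := gauss_step m
  set S := ∑ j ∈ Finset.range m, (m+1-j)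
  set Se := ∑ j, (f j : ℕ)
  have h : ((m+1)*((m+1)+1)/2) * t = S * t + t := by
    rw [← hg]; ring
  omega

lemma core_le_N (m t q : ℕ) (f : Fin m → Fin (q+1)) (hqt : 2*(m+1)*q ≤ t) (i : ℕ) :
    coreLam m t q f i ≤ ((m+1)*((m+1)+1)/2) * t := by
  have hT : ((m+1)*((m+1)+1)/2) * 2 = (m+1)*(m+2) := by
    obtain ⟨b, hb⟩ := Nat.even_mul_succ_self (m+1)
    rw [hb]; omega
  have h0 := core_mono m t q f hqt 0 i (Nat.zero_le i)
  refine le_trans h0 ?_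
  unfold coreLam
  split_ifs with hm
  · have hf := core_fval m q f ⟨0, hm⟩
    have hq := core_q_le m t q hqt
    have h1 : (m+1-0)*t + (f ⟨0,hm⟩ : ℕ) ≤ (m+2)*t := by
      rw [Nat.sub_zero, show (m+2)*t = (m+1)*t + t from by ring]
      omega
    refine le_trans h1 ?_
    apply Nat.mul_le_mul_right
    nlinarith
  · have hm0 : m = 0 := by omega
    subst hm0
    simp

lemma core_half (m t q : ℕ) (f : Fin m → Fin (q+1)) (hqt : 2*(m+1)*q ≤ t) (i : ℕ)
    (hi : i < m+1) : t ≤ 2 * coreLam m t q f i := by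
  unfold coreLam
  split_ifs with h
  · have h1 : 1*t ≤ (m+1-i)*t := Nat.mul_le_mul_right t (by omega)
    rw [one_mul] at h1
    omega
  · have hst := core_sum_le m t q f hqt
    omega

lemma core_gap (m t q : ℕ) (f : Fin m → Fin (q+1)) (hqt : 2*(m+1)*q ≤ t) (i j : ℕ)
    (hij : i < j) (hj : j < m+1) :
    2 * coreLam m t q f j + t ≤ 2 * coreLam m t q f i := by
  have hi : i < m := by omega
  have hq2 := core_q_le m t q hqt
  unfold coreLam
  rw [dif_pos hi]
  split_ifs with hj2
  · have he : (f ⟨j, hj2⟩ : ℕ) ≤ q := core_fval m q f _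
    have h1 : (m+1-j+1)*t ≤ (m+1-i)*t := Nat.mul_le_mul_right t (by omega)
    have h2 : (m+1-j+1)*t = (m+1-j)*t + t := by ring
    omega
  · have h1 : 2*t ≤ (m+1-i)*t := Nat.mul_le_mul_right t (by omega)
    omega

/-- The core diagrams as elements of `Fin (m+1) → Fin (N+1)`. -/
def corePhi (m t q N : ℕ) (h : ∀ (f : Fin m → Fin (q+1)) (i : ℕ), coreLam m t q f i ≤ N)
    (f : Fin m → Fin (q+1)) (i : Fin (m+1)) : Fin (N+1) :=
  ⟨coreLam m t q f i, Nat.lt_succ_of_le (h f i)⟩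

lemma corePhi_inj (m t q N : ℕ) (h : ∀ (f : Fin m → Fin (q+1)) (i : ℕ), coreLam m t q f i ≤ N) :
    Function.Injective (corePhi m t q N h) := by
  intro f g hfg
  funext j
  have h1 : (corePhi m t q N h f ⟨(j:ℕ), by omega⟩ : ℕ)
      = (corePhi m t q N h g ⟨(j:ℕ), by omega⟩ : ℕ) := by rw [hfg]
  unfold corePhi coreLam at h1
  simp only [dif_pos j.isLt] at h1
  simp only [Fin.eta] at h1
  exact Fin.val_injective (by omega)

lemma pad_le (d r N : ℕ) (lam : Fin r → Fin (N+1))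
    (hmono : ∀ i j : Fin r, i ≤ j → (lam j : ℕ) ≤ (lam i : ℕ)) (p q : Fin d)
    (hpq : p ≤ q) : padDiagram d r N lam q ≤ padDiagram d r N lam p := by
  unfold padDiagram
  split_ifs with hq hp hp
  · exact hmono ⟨p, hp⟩ ⟨q, hq⟩ hpq
  · exact absurd (lt_of_le_of_lt (Fin.le_iff_val_le_val.mp hpq) hq) hp
  · exact Nat.zero_le _
  · exact le_refl _

lemma weylDim_nonneg (d r N : ℕ) (lam : Fin r → Fin (N+1))
    (hmono : ∀ i j : Fin r, i ≤ j → (lam j : ℕ) ≤ (lam i : ℕ)) :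
    0 ≤ weylDim d (padDiagram d r N lam) := by
  unfold weylDim
  apply div_nonneg
  · apply Finset.prod_nonneg
    intro p hp
    have hlt : p.1 < p.2 := (Finset.mem_filter.mp hp).2
    have h1 : (padDiagram d r N lam p.2 : ℝ) ≤ padDiagram d r N lam p.1 := by
      exact_mod_cast pad_le d r N lam hmono p.1 p.2 hlt.le
    have h2 : (p.1 : ℝ) ≤ (p.2 : ℝ) := by exact_mod_cast hlt.le
    linarith
  · apply Finset.prod_nonneg
    intro k _
    positivity

/-- There is a constant `c(r,d) > 0` such that for all `N` divisible by `r(r+1)/2`,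
the total Weyl dimension over Young diagrams with `N` boxes and at most `r` rows is at
least `c(r,d) ⬝ N^((2dr - r² + r - 2)/2)`. -/
theorem total_dimension_lower_bound (d r : ℕ) (hr : 1 ≤ r) (hrd : r ≤ d) :
    ∃ c : ℝ, 0 < c ∧ ∀ N : ℕ, r * (r + 1) / 2 ∣ N →
      c * (N : ℝ) ^ ((2 * d * r - r ^ 2 + r - 2) / 2)
        ≤ ∑ lam ∈ youngDiagrams N r, weylDim d (padDiagram d r N lam) := by
  obtain ⟨m, rfl⟩ : ∃ m, r = m + 1 := ⟨r - 1, by omega⟩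
  obtain ⟨u, rfl⟩ : ∃ u, d = (m + 1) + u := ⟨d - (m+1), by omega⟩
  clear hr hrd
  set T : ℕ := (m+1) * ((m+1) + 1) / 2 with hTdef
  have hTpos : 0 < T := by
    rw [hTdef]
    have : 2 ≤ (m+1) * ((m+1)+1) := by nlinarith
    omega
  set P : ℕ := ∑ i ∈ Finset.range (m+1), (((m+1)+u) - 1 - i) with hPdef
  set C : ℝ := ∏ k ∈ Finset.range ((m+1)+u), (Nat.factorial k : ℝ) with hCdef
  have hC : 0 < C := Finset.prod_pos fun k _ => by positivity
  have hTR : (0:ℝ) < (T:ℝ) := by exact_mod_cast hTpos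
  refine ⟨((T:ℝ)^(m+P) * ((2*(m+1) : ℕ):ℝ)^m * 2^P * C)⁻¹, ?_, ?_⟩
  · apply inv_pos.mpr
    apply mul_pos (mul_pos (mul_pos (pow_pos hTR _) (pow_pos ?_ _)) (pow_pos two_pos _)) hC
    exact_mod_cast Nat.succ_le_of_lt (by omega : 0 < 2*(m+1))
  intro N hdvd
  rw [exp_eq m u, ← hPdef]
  set t : ℕ := N / T with htdef
  have hN : T * t = N := Nat.mul_div_cancel' hdvd
  set q : ℕ := t / (2*(m+1)) with hqdef
  have hqt : 2*(m+1)*q ≤ t := by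
    rw [hqdef]
    exact Nat.mul_div_le t (2*(m+1))
  have hlt : t < 2*(m+1)*(q+1) := by
    have hdm := Nat.div_add_mod t (2*(m+1))
    have hmod : t % (2*(m+1)) < 2*(m+1) := Nat.mod_lt t (by omega)
    have hx : 2*(m+1)*(q+1) = 2*(m+1)*q + 2*(m+1) := by ring
    rw [hqdef] at hx ⊢
    omega
  have hleN : ∀ (f : Fin m → Fin (q+1)) (i : ℕ), coreLam m t q f i ≤ N := by
    intro f i
    rw [← hN]
    exact core_le_N m t q f hqt i
  set Φ := corePhi m t q N hleN with hPhi
  -- membership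
  have hmem : ∀ f : Fin m → Fin (q+1), Φ f ∈ youngDiagrams N (m+1) := by
    intro f
    rw [youngDiagrams, Finset.mem_filter]
    refine ⟨Finset.mem_univ _, ?_, ?_⟩
    · intro i j hij
      exact core_mono m t q f hqt i j (Fin.le_iff_val_le_val.mp hij)
    · have h1 : ∑ i : Fin (m+1), (Φ f i : ℕ) = ∑ i ∈ Finset.range (m+1), coreLam m t q f i := by
        rw [← Fin.sum_univ_eq_sum_range (coreLam m t q f) (m+1)]
        rfl
      rw [h1, core_total m t q f (core_sum_le m t q f hqt), ← hTdef, hN]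
  -- the factor lower bound
  have hfac : ∀ (f : Fin m → Fin (q+1)) (p : Fin ((m+1)+u) × Fin ((m+1)+u)), p.1 < p.2 →
      (if (p.1 : ℕ) < m+1 then (t:ℝ)/2 else 1)
      ≤ ((padDiagram ((m+1)+u) (m+1) N (Φ f) p.1 : ℝ)
          - (padDiagram ((m+1)+u) (m+1) N (Φ f) p.2 : ℝ) - (p.1 : ℝ) + (p.2 : ℝ)) := by
    intro f p hp
    have hp12 : (p.1 : ℕ) < (p.2 : ℕ) := hp
    have hcast : ((p.1:ℕ) : ℝ) ≤ ((p.2:ℕ) : ℝ) := by exact_mod_cast hp12.le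
    by_cases h1 : (p.1 : ℕ) < m+1
    · rw [if_pos h1]
      have hpad1 : (padDiagram ((m+1)+u) (m+1) N (Φ f) p.1 : ℕ) = coreLam m t q f p.1 := by
        unfold padDiagram
        rw [dif_pos h1]
        rfl
      by_cases h2 : (p.2 : ℕ) < m+1
      · have hpad2 : (padDiagram ((m+1)+u) (m+1) N (Φ f) p.2 : ℕ) = coreLam m t q f p.2 := by
          unfold padDiagram
          rw [dif_pos h2]
          rfl
        have hg := core_gap m t q f hqt p.1 p.2 hp12 h2
        have hg' : (2 * coreLam m t q f p.2 + t : ℝ) ≤ (2 * coreLam m t q f p.1 : ℝ) := by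
          exact_mod_cast hg
        rw [hpad1, hpad2]
        push_cast at hg' ⊢
        linarith
      · have hpad2 : (padDiagram ((m+1)+u) (m+1) N (Φ f) p.2 : ℕ) = 0 := by
          unfold padDiagram
          rw [dif_neg h2]
        have hh := core_half m t q f hqt p.1 h1
        have hh' : (t : ℝ) ≤ (2 * coreLam m t q f p.1 : ℝ) := by exact_mod_cast hh
        rw [hpad1, hpad2]
        push_cast at hh' ⊢
        linarith
    · rw [if_neg h1]
      have h2 : ¬ ((p.2 : ℕ) < m+1) := by omega
      have hpad1 : (padDiagram ((m+1)+u) (m+1) N (Φ f) p.1 : ℕ) = 0 := by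
        unfold padDiagram; rw [dif_neg h1]
      have hpad2 : (padDiagram ((m+1)+u) (m+1) N (Φ f) p.2 : ℕ) = 0 := by
        unfold padDiagram; rw [dif_neg h2]
      rw [hpad1, hpad2]
      have : ((p.1:ℕ) : ℝ) + 1 ≤ ((p.2:ℕ) : ℝ) := by exact_mod_cast hp12
      push_cast
      linarith
  -- lower bound on each core Weyl dimension
  have hmain : ∀ f : Fin m → Fin (q+1),
      ((t:ℝ)/2)^P / C ≤ weylDim ((m+1)+u) (padDiagram ((m+1)+u) (m+1) N (Φ f)) := by
    intro f
    unfold weylDim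
    rw [← hCdef]
    apply div_le_div_of_nonneg_right ?_ hC.le
    calc ((t:ℝ)/2)^P
        = ∏ p ∈ Finset.univ.filter (fun p : Fin ((m+1)+u) × Fin ((m+1)+u) => p.1 < p.2),
            (if (p.1 : ℕ) < m+1 then (t:ℝ)/2 else 1) := by
          rw [prod_ite_lt_eval ((m+1)+u) (m+1) (by omega) ((t:ℝ)/2), ← hPdef]
    _ ≤ _ := by
          apply Finset.prod_le_prod
          · intro p _
            split <;> positivity
          · intro p hp
            exact hfac f p (Finset.mem_filter.mp hp).2
  have hcard : (Finset.univ : Finset (Fin m → Fin (q+1))).card = (q+1)^m := by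
    simp [Fintype.card_fun]
  have hq1 : (t:ℝ)/(2*(m+1)) ≤ ((q:ℝ)+1) := by
    rw [div_le_iff₀ (by positivity)]
    have h := hlt
    have h2 : (t:ℝ) < ((2*(m+1)*(q+1) : ℕ) : ℝ) := by exact_mod_cast h
    push_cast at h2
    linarith
  have hTne : (T:ℝ) ≠ 0 := ne_of_gt hTR
  have hCne : C ≠ 0 := ne_of_gt hC
  calc
    ((T:ℝ)^(m+P) * ((2*(m+1) : ℕ):ℝ)^m * 2^P * C)⁻¹ * (N:ℝ)^(m+P)
        = ((t:ℝ)/(2*(m+1)))^m * (((t:ℝ)/2)^P / C) := by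
          rw [← hN]
          push_cast
          rw [mul_pow, pow_add, pow_add, div_pow, div_pow, mul_pow (2:ℝ) ((m:ℝ)+1)]
          field_simp
          ring
    _ ≤ ((q:ℝ)+1)^m * (((t:ℝ)/2)^P / C) := by
          apply mul_le_mul_of_nonneg_right (pow_le_pow_left₀ (by positivity) hq1 m)
          positivity
    _ = ∑ _f : Fin m → Fin (q+1), (((t:ℝ)/2)^P / C) := by
          rw [Finset.sum_const, hcard, nsmul_eq_mul]
          push_cast
          ring
    _ ≤ ∑ f : Fin m → Fin (q+1), weylDim ((m+1)+u) (padDiagram ((m+1)+u) (m+1) N (Φ f)) :=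
          Finset.sum_le_sum fun f _ => hmain f
    _ = ∑ lam ∈ Finset.univ.image Φ, weylDim ((m+1)+u) (padDiagram ((m+1)+u) (m+1) N lam) := by
          rw [hPhi]
          exact (Finset.sum_image (g := corePhi m t q N hleN) (f := fun lam => weylDim ((m+1)+u)
              (padDiagram ((m+1)+u) (m+1) N lam))
            (fun a _ b _ h => corePhi_inj m t q N hleN h)).symm
    _ ≤ ∑ lam ∈ youngDiagrams N (m+1), weylDim ((m+1)+u) (padDiagram ((m+1)+u) (m+1) N lam) := by
          apply Finset.sum_le_sum_of_subset_of_nonneg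
          · intro x hx
            obtain ⟨f, _, rfl⟩ := Finset.mem_image.mp hx
            exact hmem f
          · intro lam hlam _
            rw [youngDiagrams, Finset.mem_filter] at hlam
            exact weylDim_nonneg _ _ _ lam hlam.2.1
end
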